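/- arXiv:1310.8378 — 4 statements merged into one kernel-verified Lean document; each statement's English description precedes it below -/
import Mathlib

section
/- There is an absolute constant C > 0 such that for every positive integer k, every k-permutation π and every positive integer n, S_n(π) ≤ 2^{C·k·n}. -/
open Filter

/-- A binary matrix `A` contains a binary matrix `P` (as a submatrix pattern):
there are strictly increasing choices of rows and columns such that `A` has a
one wherever `P` does. -/
def ContainsMat {k l m n : ℕ} (P : Fin k → Fin l → Bool) (A : Fin m → Fin n → Bool) : Prop :=
  ∃ (r : Fin k → Fin m) (c : Fin l → Fin n), StrictMono r ∧ StrictMono c ∧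
    ∀ i j, P i j = true → A (r i) (c j) = true

/-- The permutation matrix of a permutation of `{1,…,k}`. -/
def permMatrix {k : ℕ} (π : Equiv.Perm (Fin k)) : Fin k → Fin k → Bool :=
  fun i j => decide (π i = j)

/-- The mass of a binary matrix: the number of its one-entries. -/
def mass {m n : ℕ} (A : Fin m → Fin n → Bool) : ℕ :=
  (Finset.univ.filter fun p : Fin m × Fin n => A p.1 p.2 = true).card

/-- A binary matrix avoids a permutation if it avoids its permutation matrix. -/
def AvoidsPerm {k m n : ℕ} (A : Fin m → Fin n → Bool) (π : Equiv.Perm (Fin k)) : Prop :=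
  ¬ ContainsMat (permMatrix π) A

/-- `ex n π`: the maximum mass of an `n × n` binary matrix avoiding `π`. -/
noncomputable def exP {k : ℕ} (n : ℕ) (π : Equiv.Perm (Fin k)) : ℕ :=
  sSup {m | ∃ A : Fin n → Fin n → Bool, AvoidsPerm A π ∧ mass A = m}

/-- `ex n U` for a set `U` of permutations: the maximum mass of an `n × n`
binary matrix avoiding every permutation in `U`. -/
noncomputable def exU {k : ℕ} (n : ℕ) (U : Finset (Equiv.Perm (Fin k))) : ℕ :=
  sSup {m | ∃ A : Fin n → Fin n → Bool, (∀ π ∈ U, AvoidsPerm A π) ∧ mass A = m}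

/-- An `n`-permutation `σ` contains a `k`-permutation `π`. -/
def PermContains {n k : ℕ} (σ : Equiv.Perm (Fin n)) (π : Equiv.Perm (Fin k)) : Prop :=
  ∃ x : Fin k → Fin n, StrictMono x ∧ ∀ i j, σ (x i) < σ (x j) ↔ π i < π j

/-- `S n π`: the number of `n`-permutations avoiding `π`. -/
noncomputable def SP {k : ℕ} (n : ℕ) (π : Equiv.Perm (Fin k)) : ℕ :=
  Nat.card {σ : Equiv.Perm (Fin n) // ¬ PermContains σ π}

/-- `S n U`: the number of `n`-permutations avoiding every permutation in `U`. -/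
noncomputable def SU {k : ℕ} (n : ℕ) (U : Finset (Equiv.Perm (Fin k))) : ℕ :=
  Nat.card {σ : Equiv.Perm (Fin n) // ∀ π ∈ U, ¬ PermContains σ π}

/-- `T n π`: the number of `n × n` binary matrices avoiding `π`. -/
noncomputable def TP {k : ℕ} (n : ℕ) (π : Equiv.Perm (Fin k)) : ℕ :=
  Nat.card {A : Fin n → Fin n → Bool // AvoidsPerm A π}

/-- `P` is an interval minor of `A`: there are ordered disjoint row intervals
`[rlo a, rhi a]` and column intervals `[clo b, chi b]` such that wherever `P`
has a one, the corresponding block of `A` contains a one. -/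
def IntervalMinor {k l m n : ℕ} (P : Fin k → Fin l → Bool) (A : Fin m → Fin n → Bool) : Prop :=
  ∃ (rlo rhi : Fin k → Fin m) (clo chi : Fin l → Fin n),
    (∀ a, rlo a ≤ rhi a) ∧ (∀ a b, a < b → rhi a < rlo b) ∧
    (∀ a, clo a ≤ chi a) ∧ (∀ a b, a < b → chi a < clo b) ∧
    ∀ a b, P a b = true → ∃ i j, rlo a ≤ i ∧ i ≤ rhi a ∧ clo b ≤ j ∧ j ≤ chi b ∧ A i j = true

/-- The all-ones `k × l` binary matrix. -/
def J (k l : ℕ) : Fin k → Fin l → Bool := fun _ _ => true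

/-- `m n P`: the maximum mass of an `n × n` binary matrix avoiding `P` as an
interval minor. -/
noncomputable def mP {k l : ℕ} (n : ℕ) (P : Fin k → Fin l → Bool) : ℕ :=
  sSup {m | ∃ A : Fin n → Fin n → Bool, ¬ IntervalMinor P A ∧ mass A = m}

/-- `f_P(t,s)`: the supremum (in `ℕ∞`) of those `N` for which there is an
`N × t` binary matrix with at least `s` ones in each row avoiding `P` as an
interval minor. -/
noncomputable def fP {k l : ℕ} (P : Fin k → Fin l → Bool) (t s : ℕ) : ℕ∞ :=
  sSup {x : ℕ∞ | ∃ N : ℕ, x = (N : ℕ∞) ∧ ∃ A : Fin N → Fin t → Bool,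
    (∀ i, s ≤ (Finset.univ.filter fun j => A i j = true).card) ∧ ¬ IntervalMinor P A}

/-- `g_P(t,s)`: the supremum (in `ℕ∞`) of those `N` for which there is a
`t × N` binary matrix with at least `s` ones in each column avoiding `P` as an
interval minor. -/
noncomputable def gP {k l : ℕ} (P : Fin k → Fin l → Bool) (t s : ℕ) : ℕ∞ :=
  sSup {x : ℕ∞ | ∃ N : ℕ, x = (N : ℕ∞) ∧ ∃ A : Fin t → Fin N → Bool,
    (∀ j, s ≤ (Finset.univ.filter fun i => A i j = true).card) ∧ ¬ IntervalMinor P A}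

namespace SWAux


def cellbox (m : ℕ) : Finset (ℕ × ℕ) := Finset.range m ×ˢ Finset.range m

def contr (d : ℕ) (M : Finset (ℕ × ℕ)) : Finset (ℕ × ℕ) :=
  M.image (fun p => (p.1 / d, p.2 / d))

def NMino (k : ℕ) (M : Finset (ℕ × ℕ)) : Prop :=
  ∃ rl rh cl ch : Fin k → ℕ,
    (∀ a, rl a ≤ rh a) ∧ (∀ a b, a < b → rh a < rl b) ∧
    (∀ a, cl a ≤ ch a) ∧ (∀ a b, a < b → ch a < cl b) ∧
    ∀ a b, ∃ p ∈ M, rl a ≤ p.1 ∧ p.1 ≤ rh a ∧ cl b ≤ p.2 ∧ p.2 ≤ ch b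

lemma nmino_mono {k : ℕ} {M M' : Finset (ℕ × ℕ)} (h : M ⊆ M') (hm : NMino k M) :
    NMino k M' := by
  obtain ⟨rl, rh, cl, ch, h1, h2, h3, h4, h5⟩ := hm
  exact ⟨rl, rh, cl, ch, h1, h2, h3, h4, fun a b => by
    obtain ⟨p, hp, hb⟩ := h5 a b; exact ⟨p, h hp, hb⟩⟩

lemma nmino_contr {k d : ℕ} (hd : 0 < d) {M : Finset (ℕ × ℕ)}
    (hm : NMino k (M.image (fun p => (p.1 / d, p.2 / d)))) : NMino k M := by
  obtain ⟨rl, rh, cl, ch, h1, h2, h3, h4, h5⟩ := hm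
  refine ⟨fun a => rl a * d, fun a => rh a * d + (d - 1),
          fun a => cl a * d, fun a => ch a * d + (d - 1), ?_, ?_, ?_, ?_, ?_⟩
  · intro a; show rl a * d ≤ rh a * d + (d - 1)
    have := Nat.mul_le_mul_right d (h1 a); omega
  · intro a b hab
    show rh a * d + (d - 1) < rl b * d
    have h : rh a + 1 ≤ rl b := h2 a b hab
    have h' := Nat.mul_le_mul_right d h
    have e : (rh a + 1) * d = rh a * d + d := by ring
    rw [e] at h'; omega
  · intro a; show cl a * d ≤ ch a * d + (d - 1)
    have := Nat.mul_le_mul_right d (h3 a); omega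
  · intro a b hab
    show ch a * d + (d - 1) < cl b * d
    have h' := Nat.mul_le_mul_right d (h4 a b hab)
    have e : (ch a + 1) * d = ch a * d + d := by ring
    rw [e] at h'; omega
  · intro a b
    obtain ⟨q, hq, hb1, hb2, hb3, hb4⟩ := h5 a b
    simp only [Finset.mem_image] at hq
    obtain ⟨p, hp, rfl⟩ := hq
    simp only at hb1 hb2 hb3 hb4
    refine ⟨p, hp, ?_, ?_, ?_, ?_⟩ <;> simp only []
    · exact (Nat.le_div_iff_mul_le hd).1 hb1
    · have h2 : p.1 / d < rh a + 1 := Nat.lt_succ_of_le hb2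
      have h3 := (Nat.div_lt_iff_lt_mul hd).1 h2
      have e : (rh a + 1) * d = rh a * d + d := by ring
      rw [e] at h3; omega
    · exact (Nat.le_div_iff_mul_le hd).1 hb3
    · have h2 : p.2 / d < ch b + 1 := Nat.lt_succ_of_le hb4
      have h3 := (Nat.div_lt_iff_lt_mul hd).1 h2
      have e : (ch b + 1) * d = ch b * d + d := by ring
      rw [e] at h3; omega

def Phi (k : ℕ) : ℕ → ℕ → ℕ
  | 0, _ => 0
  | 1, _ => k - 1
  | _ + 2, 0 => 0
  | j + 2, e + 1 => 2 * Phi k (j + 2) e + 2 * Phi k (j + 1) e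

lemma phi_le (k : ℕ) : ∀ e j, Phi k j e ≤ (k - 1) * 4 ^ e * 2 ^ j := by
  intro e
  induction e with
  | zero =>
    intro j
    match j with
    | 0 => simp [Phi]
    | 1 =>
      show k - 1 ≤ (k - 1) * 4 ^ 0 * 2 ^ 1
      have : 0 < 4 ^ 0 * 2 ^ 1 := by norm_num
      calc k - 1 = (k - 1) * 1 := by ring
      _ ≤ (k - 1) * (4 ^ 0 * 2 ^ 1) := by exact Nat.mul_le_mul_left _ this
      _ = (k - 1) * 4 ^ 0 * 2 ^ 1 := by ring
    | j + 2 => simp [Phi]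
  | succ e ih =>
    intro j
    match j with
    | 0 => simp [Phi]
    | 1 =>
      show k - 1 ≤ (k - 1) * 4 ^ (e + 1) * 2 ^ 1
      have h : 0 < 4 ^ (e+1) * 2 ^ 1 := by positivity
      calc k - 1 = (k - 1) * 1 := by ring
      _ ≤ (k - 1) * (4 ^ (e+1) * 2 ^ 1) := by exact Nat.mul_le_mul_left _ h
      _ = (k - 1) * 4 ^ (e+1) * 2 ^ 1 := by ring
    | j + 2 =>
      show 2 * Phi k (j + 2) e + 2 * Phi k (j + 1) e ≤ _
      have h1 := ih (j + 2)
      have h2 := ih (j + 1)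
      calc 2 * Phi k (j + 2) e + 2 * Phi k (j + 1) e
          ≤ 2 * ((k - 1) * 4 ^ e * 2 ^ (j+2)) + 2 * ((k - 1) * 4 ^ e * 2 ^ (j+1)) := by
            gcongr
      _ = (k - 1) * 4 ^ e * 2 ^ j * 12 := by ring
      _ ≤ (k - 1) * 4 ^ e * 2 ^ j * 16 := by exact Nat.mul_le_mul_left _ (by norm_num)
      _ = (k - 1) * 4 ^ (e+1) * 2 ^ (j+2) := by ring

lemma phi_ge (k : ℕ) : ∀ e j, j ≤ e + 1 → 1 ≤ j → k - 1 ≤ Phi k j e := by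
  intro e
  induction e with
  | zero =>
    intro j h1 h2
    match j, h1, h2 with
    | 1, _, _ => simp [Phi]
  | succ e ih =>
    intro j h1 h2
    match j with
    | 1 => simp [Phi]
    | j + 2 =>
      have := ih (j + 1) (by omega) (by omega)
      show k - 1 ≤ 2 * Phi k (j + 2) e + 2 * Phi k (j + 1) e
      omega

def Conf (k j lo hi : ℕ) (F : ℕ → Finset ℕ) (I : Finset ℕ) : Prop :=
  ∃ K, K ⊆ I ∧ K.card = k ∧ ∃ cl ch : Fin j → ℕ,
    (∀ b, lo ≤ cl b ∧ cl b ≤ ch b ∧ ch b < hi) ∧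
    (∀ b b', b < b' → ch b < cl b') ∧
    (∀ i ∈ K, ∀ b, ∃ x ∈ F i, cl b ≤ x ∧ x ≤ ch b)

lemma tall_base (k : ℕ) (hk : 2 ≤ k) (s lo hi : ℕ) (F : ℕ → Finset ℕ) (I : Finset ℕ)
    (hs : 1 ≤ s)
    (hmem : ∀ i ∈ I, F i ⊆ Finset.Ico lo hi ∧ s ≤ (F i).card)
    (hno : ¬ Conf k 1 lo hi F I) : I.card ≤ k - 1 := by
  by_contra hcard
  have hk' : k ≤ I.card := by omega
  obtain ⟨K, hKsub, hKcard⟩ := Finset.exists_subset_card_eq (s := I) hk'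
  have hKne : K.Nonempty := by
    rw [← Finset.card_pos, hKcard]; omega
  obtain ⟨i0, hi0⟩ := hKne
  have hi0I := hKsub hi0
  obtain ⟨hsub0, hcard0⟩ := hmem i0 hi0I
  have hFne : (F i0).Nonempty := by
    rw [← Finset.card_pos]; omega
  obtain ⟨x0, hx0⟩ := hFne
  have hx0' := hsub0 hx0
  rw [Finset.mem_Ico] at hx0'
  have hlohi : lo < hi := lt_of_le_of_lt hx0'.1 hx0'.2
  apply hno
  refine ⟨K, hKsub, hKcard, fun _ => lo, fun _ => hi - 1, ?_, ?_, ?_⟩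
  · intro b
    refine ⟨?_, ?_, ?_⟩ <;> simp only [] <;> omega
  · intro b b' hbb
    rw [Subsingleton.elim b b'] at hbb
    exact absurd hbb (lt_irrefl _)
  · intro i hiK b
    obtain ⟨hsubi, hcardi⟩ := hmem i (hKsub hiK)
    have : (F i).Nonempty := by rw [← Finset.card_pos]; omega
    obtain ⟨x, hx⟩ := this
    have hx' := hsubi hx
    rw [Finset.mem_Ico] at hx'
    refine ⟨x, hx, ?_, ?_⟩ <;> simp only [] <;> omega

lemma tall_lemma (k : ℕ) (hk : 2 ≤ k) :
    ∀ e j s lo hi (F : ℕ → Finset ℕ) (I : Finset ℕ),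
      1 ≤ j → 2 ^ j ≤ s → hi - lo ≤ 2 ^ e →
      (∀ i ∈ I, F i ⊆ Finset.Ico lo hi ∧ s ≤ (F i).card) →
      ¬ Conf k j lo hi F I →
      I.card ≤ Phi k j e := by
  intro e
  induction e with
  | zero =>
    intro j s lo hi F I hj hs hwidth hmem hno
    match j with
    | 1 => exact tall_base k hk s lo hi F I (by have := Nat.one_le_two_pow (n := 1); omega) hmem hno
    | j + 2 =>
      show I.card ≤ 0
      rw [Nat.le_zero, Finset.card_eq_zero, Finset.eq_empty_iff_forall_notMem]
      intro i hiI
      obtain ⟨hsub, hcard⟩ := hmem i hiI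
      have h1 : (F i).card ≤ hi - lo := by
        have := Finset.card_le_card hsub
        rwa [Nat.card_Ico] at this
      have h2 : 4 ≤ 2 ^ (j + 2) := by
        have : 2 ^ 2 ≤ 2 ^ (j + 2) := Nat.pow_le_pow_right (by norm_num) (by omega)
        omega
      omega
  | succ e ih =>
    intro j s lo hi F I hj hs hwidth hmem hno
    match j with
    | 1 => exact tall_base k hk s lo hi F I (by have := Nat.one_le_two_pow (n := 1); omega) hmem hno
    | j + 2 =>
      show I.card ≤ 2 * Phi k (j + 2) e + 2 * Phi k (j + 1) e
      classical
      rcases Finset.eq_empty_or_nonempty I with rfl | ⟨i0, hi0⟩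
      · simp
      have hpow1 : (1:ℕ) ≤ 2 ^ (j+2) := Nat.one_le_two_pow
      have hlohi : lo < hi := by
        obtain ⟨hsub0, hcard0⟩ := hmem i0 hi0
        have hne : (F i0).Nonempty := by rw [← Finset.card_pos]; omega
        obtain ⟨x, hx⟩ := hne
        have := hsub0 hx
        rw [Finset.mem_Ico] at this
        omega
      set mid := min (lo + 2 ^ e) hi with hmid
      have hlomid : lo ≤ mid := le_min (Nat.le_add_right _ _) (le_of_lt hlohi)
      have hmidhi : mid ≤ hi := min_le_right _ _
      have hLwidth : mid - lo ≤ 2 ^ e := by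
        have := min_le_left (lo + 2 ^ e) hi
        omega
      have hRwidth : hi - mid ≤ 2 ^ e := by
        rcases le_total (lo + 2 ^ e) hi with h | h
        · rw [hmid, min_eq_left h]
          have : 2 ^ (e+1) = 2 ^ e + 2 ^ e := by ring
          omega
        · rw [hmid, min_eq_right h]; omega
      set L := Finset.Ico lo mid with hL
      set R := Finset.Ico mid hi with hR
      set IL := I.filter (fun i => F i ⊆ L) with hIL
      set I1 := I.filter (fun i => ¬ F i ⊆ L) with hI1
      set IR := I1.filter (fun i => F i ⊆ R) with hIR
      set IC := I1.filter (fun i => ¬ F i ⊆ R) with hIC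
      set ICL := IC.filter (fun i => s / 2 ≤ ((F i) ∩ L).card) with hICL
      set ICR := IC.filter (fun i => ¬ s / 2 ≤ ((F i) ∩ L).card) with hICR
      have hsplit1 : IL.card + I1.card = I.card := Finset.card_filter_add_card_filter_not _
      have hsplit2 : IR.card + IC.card = I1.card := Finset.card_filter_add_card_filter_not _
      have hsplit3 : ICL.card + ICR.card = IC.card := Finset.card_filter_add_card_filter_not _
      have hI1I : I1 ⊆ I := Finset.filter_subset _ _
      have hICI : IC ⊆ I := (Finset.filter_subset _ _).trans hI1I
      have hcrossR : ∀ i ∈ IC, ∃ x ∈ F i, mid ≤ x ∧ x ≤ hi - 1 := by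
        intro i hiC
        rw [hIC, Finset.mem_filter, hI1, Finset.mem_filter] at hiC
        obtain ⟨⟨hiI, hnsubL⟩, _⟩ := hiC
        obtain ⟨x, hx, hxnL⟩ := Finset.not_subset.1 hnsubL
        have hxI := (hmem i hiI).1 hx
        rw [Finset.mem_Ico] at hxI
        rw [hL, Finset.mem_Ico] at hxnL
        push_neg at hxnL
        exact ⟨x, hx, by omega, by omega⟩
      have hcrossL : ∀ i ∈ IC, ∃ x ∈ F i, lo ≤ x ∧ x ≤ mid - 1 := by
        intro i hiC
        rw [hIC, Finset.mem_filter] at hiC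
        obtain ⟨hiI1, hnsubR⟩ := hiC
        obtain ⟨x, hx, hxnR⟩ := Finset.not_subset.1 hnsubR
        have hxI := (hmem i (hI1I hiI1)).1 hx
        rw [Finset.mem_Ico] at hxI
        rw [hR, Finset.mem_Ico] at hxnR
        push_neg at hxnR
        exact ⟨x, hx, by omega, by omega⟩
      -- bound on IL
      have hIL_bound : IL.card ≤ Phi k (j+2) e := by
        apply ih (j+2) s lo mid F IL (by omega) hs hLwidth
        · intro i hiF
          rw [hIL, Finset.mem_filter] at hiF
          exact ⟨hiF.2, (hmem i hiF.1).2⟩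
        · rintro ⟨K, hKsub, hKcard, cl, ch, hb, hord, htr⟩
          exact hno ⟨K, hKsub.trans (Finset.filter_subset _ _), hKcard, cl, ch,
            fun b => ⟨(hb b).1, (hb b).2.1, lt_of_lt_of_le (hb b).2.2 hmidhi⟩, hord, htr⟩
      -- bound on IR
      have hIR_bound : IR.card ≤ Phi k (j+2) e := by
        apply ih (j+2) s mid hi F IR (by omega) hs hRwidth
        · intro i hiF
          rw [hIR, Finset.mem_filter] at hiF
          exact ⟨hiF.2, (hmem i (hI1I hiF.1)).2⟩
        · rintro ⟨K, hKsub, hKcard, cl, ch, hb, hord, htr⟩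
          exact hno ⟨K, (hKsub.trans (Finset.filter_subset _ _)).trans hI1I, hKcard, cl, ch,
            fun b => ⟨le_trans hlomid (hb b).1, (hb b).2.1, (hb b).2.2⟩, hord, htr⟩
      -- bound on ICL
      have hICL_bound : ICL.card ≤ Phi k (j+1) e := by
        have hs2 : 2 ^ (j+1) ≤ s / 2 := by
          have : 2 ^ (j+2) = 2 * 2 ^ (j+1) := by ring
          omega
        apply ih (j+1) (s/2) lo mid (fun i => F i ∩ L) ICL (by omega) hs2 hLwidth
        · intro i hiF
          rw [hICL, Finset.mem_filter] at hiF
          refine ⟨?_, hiF.2⟩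
          show F i ∩ L ⊆ Finset.Ico lo mid
          rw [hL]
          exact Finset.inter_subset_right
        · rintro ⟨K, hKsub, hKcard, cl, ch, hb, hord, htr⟩
          have hKIC : K ⊆ IC := hKsub.trans (Finset.filter_subset _ _)
          have hKne : K.Nonempty := by rw [← Finset.card_pos, hKcard]; omega
          obtain ⟨iK, hiK⟩ := hKne
          obtain ⟨xw, _, hxw1, hxw2⟩ := hcrossR iK (hKIC hiK)
          have hmidlthi : mid < hi := by omega
          apply hno
          refine ⟨K, fun a ha => hICI (hKIC ha), hKcard,
            Fin.snoc cl mid, Fin.snoc ch (hi - 1), ?_, ?_, ?_⟩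
          · intro b
            induction b using Fin.lastCases with
            | last =>
              simp only [Fin.snoc_last]
              exact ⟨hlomid, by omega, by omega⟩
            | cast b0 =>
              simp only [Fin.snoc_castSucc]
              exact ⟨(hb b0).1, (hb b0).2.1, lt_of_lt_of_le (hb b0).2.2 hmidhi⟩
          · intro b b' hbb
            induction b' using Fin.lastCases with
            | last =>
              have hblt : (b:ℕ) < j + 1 := by
                have := hbb
                simp only [Fin.lt_def, Fin.val_last] at this
                omega
              have hbeq : b = Fin.castSucc ⟨b.1, hblt⟩ := by
                ext; simp
              rw [hbeq]
              simp only [Fin.snoc_last, Fin.snoc_castSucc]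
              exact lt_of_lt_of_le (hb ⟨b.1, hblt⟩).2.2 (le_refl mid)
            | cast b0' =>
              have hblt : (b:ℕ) < j + 1 := by
                have := hbb
                simp only [Fin.lt_def, Fin.coe_castSucc] at this
                omega
              have hbeq : b = Fin.castSucc ⟨b.1, hblt⟩ := by
                ext; simp
              rw [hbeq]
              simp only [Fin.snoc_castSucc]
              apply hord
              rw [hbeq] at hbb
              rwa [Fin.castSucc_lt_castSucc_iff] at hbb
          · intro i hiK2 b
            induction b using Fin.lastCases with
            | last =>
              simp only [Fin.snoc_last]
              exact hcrossR i (hKIC hiK2)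
            | cast b0 =>
              simp only [Fin.snoc_castSucc]
              obtain ⟨x, hx, h1, h2⟩ := htr i hiK2 b0
              exact ⟨x, (Finset.mem_inter.1 hx).1, h1, h2⟩
      -- bound on ICR
      have hICR_bound : ICR.card ≤ Phi k (j+1) e := by
        have hs2 : 2 ^ (j+1) ≤ s / 2 := by
          have : 2 ^ (j+2) = 2 * 2 ^ (j+1) := by ring
          omega
        apply ih (j+1) (s/2) mid hi (fun i => F i ∩ R) ICR (by omega) hs2 hRwidth
        · intro i hiF
          rw [hICR, Finset.mem_filter] at hiF
          obtain ⟨hiIC, hnotL⟩ := hiF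
          constructor
          · show F i ∩ R ⊆ Finset.Ico mid hi
            rw [hR]
            exact Finset.inter_subset_right
          · -- s/2 ≤ (F i ∩ R).card
            have hiI : i ∈ I := hICI hiIC
            have hsubLR : F i ⊆ L ∪ R := by
              rw [hL, hR, Finset.Ico_union_Ico_eq_Ico hlomid hmidhi]
              exact (hmem i hiI).1
            have hunion : (F i ∩ L) ∪ (F i ∩ R) = F i := by
              rw [← Finset.inter_union_distrib_left]
              exact Finset.inter_eq_left.2 hsubLR
            have hcardsum : (F i).card ≤ (F i ∩ L).card + (F i ∩ R).card := by
              calc (F i).card = ((F i ∩ L) ∪ (F i ∩ R)).card := by rw [hunion]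
              _ ≤ (F i ∩ L).card + (F i ∩ R).card := Finset.card_union_le _ _
            have := (hmem i hiI).2
            omega
        · rintro ⟨K, hKsub, hKcard, cl, ch, hb, hord, htr⟩
          have hKIC : K ⊆ IC := hKsub.trans (Finset.filter_subset _ _)
          have hKne : K.Nonempty := by rw [← Finset.card_pos, hKcard]; omega
          obtain ⟨iK, hiK⟩ := hKne
          obtain ⟨xw, _, hxw1, hxw2⟩ := hcrossL iK (hKIC hiK)
          have hlomid' : lo < mid := by omega
          apply hno
          refine ⟨K, fun a ha => hICI (hKIC ha), hKcard,
            Fin.cases lo cl, Fin.cases (mid - 1) ch, ?_, ?_, ?_⟩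
          · intro b
            induction b using Fin.cases with
            | zero =>
              simp only [Fin.cases_zero]
              exact ⟨le_refl _, by omega, by omega⟩
            | succ b0 =>
              simp only [Fin.cases_succ]
              exact ⟨le_trans hlomid (hb b0).1, (hb b0).2.1, (hb b0).2.2⟩
          · intro b b' hbb
            induction b using Fin.cases with
            | zero =>
              induction b' using Fin.cases with
              | zero => exact absurd hbb (lt_irrefl _)
              | succ b0' =>
                simp only [Fin.cases_zero, Fin.cases_succ]
                have := (hb b0').1
                omega
            | succ b0 =>
              induction b' using Fin.cases with
              | zero =>
                exact absurd hbb (by simp [Fin.lt_def])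
              | succ b0' =>
                simp only [Fin.cases_succ]
                apply hord
                rwa [Fin.succ_lt_succ_iff] at hbb
          · intro i hiK2 b
            induction b using Fin.cases with
            | zero =>
              simp only [Fin.cases_zero]
              exact hcrossL i (hKIC hiK2)
            | succ b0 =>
              simp only [Fin.cases_succ]
              obtain ⟨x, hx, h1, h2⟩ := htr i hiK2 b0
              exact ⟨x, (Finset.mem_inter.1 hx).1, h1, h2⟩
      omega

/-- the Füredi–Hajnal-type constant -/
def ck (k : ℕ) : ℕ := 8 * Phi k k (2 * k + 2) * 2 ^ (2 * k + 2)

lemma mass_lemma (k : ℕ) (hk : 2 ≤ k) :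
    ∀ n (M : Finset (ℕ × ℕ)), M ⊆ cellbox n → ¬ NMino k M → M.card ≤ ck k * n := by
  intro n
  induction n using Nat.strong_induction_on with
  | _ n IH =>
  intro M hbox hfree
  set s0 := 2 ^ k with hs0
  set w := 2 ^ (2 * k + 2) with hw
  set Fk := Phi k k (2 * k + 2) with hFk
  have hFk1 : 1 ≤ Fk := by
    have := phi_ge k (2 * k + 2) k (by omega) (by omega)
    omega
  have hckdef : ck k = 8 * Fk * w := rfl
  have hw4 : w = 4 * (s0 * s0) := by
    rw [hw, hs0]
    rw [show 2 * k + 2 = k + k + 2 by ring, pow_add, pow_add]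
    ring
  have hwpos : 0 < w := Nat.pow_pos (by norm_num)
  by_cases hn : n ≤ w
  · -- small case
    have h1 : M.card ≤ n * n := by
      have := Finset.card_le_card hbox
      rwa [cellbox, Finset.card_product, Finset.card_range] at this
    calc M.card ≤ n * n := h1
    _ ≤ w * n := by exact Nat.mul_le_mul_right n hn
    _ ≤ ck k * n := by
        rw [hckdef]
        have : w ≤ 8 * Fk * w := by nlinarith
        exact Nat.mul_le_mul_right n this
  · push_neg at hn   -- w < n
    set m' := (n - 1) / w + 1 with hm'
    have hm'n : m' < n := by
      have h2 : (n-1) / w < n - 1 := Nat.div_lt_self (by omega) (by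
        rw [hw]; have : (2:ℕ)^1 ≤ 2 ^ (2*k+2) := Nat.pow_le_pow_right (by norm_num) (by omega)
        omega)
      omega
    have hm'w : m' * w ≤ 2 * n := by
      have h3 : ((n-1)/w) * w ≤ n - 1 := Nat.div_mul_le_self _ _
      have : m' * w = ((n-1)/w) * w + w := by rw [hm']; ring
      omega
    set φ : ℕ × ℕ → ℕ × ℕ := fun p => (p.1 / w, p.2 / w) with hφ
    set A' := M.image φ with hA'
    have hA'box : A' ⊆ cellbox m' := by
      intro b hb
      rw [hA', Finset.mem_image] at hb
      obtain ⟨p, hp, rfl⟩ := hb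
      have hp' := hbox hp
      rw [cellbox, Finset.mem_product, Finset.mem_range, Finset.mem_range] at hp' ⊢
      constructor
      · show p.1 / w < m'
        have : p.1 / w ≤ (n-1)/w := Nat.div_le_div_right (by omega)
        omega
      · show p.2 / w < m'
        have : p.2 / w ≤ (n-1)/w := Nat.div_le_div_right (by omega)
        omega
    have hA'free : ¬ NMino k A' := fun h => hfree (nmino_contr hwpos h)
    have hA'card : A'.card ≤ ck k * m' := IH m' hm'n A' hA'box hA'free
    -- fibers
    set fib : ℕ × ℕ → Finset (ℕ × ℕ) := fun b => M.filter (fun p => φ p = b) with hfib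
    have hsum : M.card = ∑ b ∈ A', (fib b).card :=
      Finset.card_eq_sum_card_fiberwise (fun x hx => Finset.mem_image_of_mem _ hx)
    -- each fiber is inside a w × w cell
    have hfib_cell : ∀ b, (fib b) ⊆
        (Finset.Ico (b.1 * w) (b.1 * w + w)) ×ˢ (Finset.Ico (b.2 * w) (b.2 * w + w)) := by
      intro b p hp
      rw [hfib, Finset.mem_filter] at hp
      obtain ⟨hpM, hpb⟩ := hp
      have h1 : p.1 / w = b.1 := congrArg Prod.fst hpb
      have h2 : p.2 / w = b.2 := congrArg Prod.snd hpb
      rw [Finset.mem_product, Finset.mem_Ico, Finset.mem_Ico]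
      have l1 : b.1 * w ≤ p.1 := (Nat.le_div_iff_mul_le hwpos).1 (le_of_eq h1.symm)
      have l2 : b.2 * w ≤ p.2 := (Nat.le_div_iff_mul_le hwpos).1 (le_of_eq h2.symm)
      have u1 : p.1 < (b.1 + 1) * w := (Nat.div_lt_iff_lt_mul hwpos).1 (by omega)
      have u2 : p.2 < (b.2 + 1) * w := (Nat.div_lt_iff_lt_mul hwpos).1 (by omega)
      have e1 : (b.1 + 1) * w = b.1 * w + w := by ring
      have e2 : (b.2 + 1) * w = b.2 * w + w := by ring
      omega
    have hfib_le : ∀ b, (fib b).card ≤ w * w := by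
      intro b
      have := Finset.card_le_card (hfib_cell b)
      rwa [Finset.card_product, Nat.card_Ico, Nat.card_Ico,
        Nat.add_sub_cancel_left, Nat.add_sub_cancel_left] at this
    set wide : ℕ × ℕ → Prop := fun b => s0 ≤ ((fib b).image Prod.snd).card with hwide
    set tall : ℕ × ℕ → Prop := fun b => s0 ≤ ((fib b).image Prod.fst).card with htall
    have hfib_small : ∀ b, ¬ wide b → ¬ tall b → (fib b).card ≤ s0 * s0 := by
      intro b h1 h2
      have hsub : fib b ⊆ ((fib b).image Prod.fst) ×ˢ ((fib b).image Prod.snd) := by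
        intro p hp
        rw [Finset.mem_product]
        exact ⟨Finset.mem_image_of_mem _ hp, Finset.mem_image_of_mem _ hp⟩
      have := Finset.card_le_card hsub
      rw [Finset.card_product] at this
      rw [hwide] at h1; rw [htall] at h2
      push_neg at h1 h2
      calc (fib b).card ≤ _ := this
      _ ≤ s0 * s0 := Nat.mul_le_mul (by omega) (by omega)
    -- counting wide cells via the tall lemma
    have hwide_count : (A'.filter wide).card ≤ m' * Fk := by
      have hcells : ∀ b ∈ A'.filter wide, b.2 ∈ Finset.range m' := by
        intro b hb
        have := hA'box (Finset.mem_of_mem_filter b hb)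
        rw [cellbox, Finset.mem_product] at this
        exact this.2
      rw [Finset.card_eq_sum_card_fiberwise hcells]
      have hstrip : ∀ c ∈ Finset.range m',
          ((A'.filter wide).filter (fun b => b.2 = c)).card ≤ Fk := by
        intro c _
        set S := (A'.filter wide).filter (fun b => b.2 = c) with hS
        have hinj : (S.image Prod.fst).card = S.card := by
          apply Finset.card_image_of_injOn
          intro b hb b' hb' heq
          simp only [Finset.mem_coe, hS, Finset.mem_filter] at hb hb'
          exact Prod.ext heq (hb.2.trans hb'.2.symm)
        rw [← hinj]
        apply tall_lemma k hk (2*k+2) k s0 (c*w) (c*w + w)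
          (fun a => (fib (a, c)).image Prod.snd) (S.image Prod.fst)
          (by omega) (le_refl _) (by rw [Nat.add_sub_cancel_left])
        · intro a ha
          rw [Finset.mem_image] at ha
          obtain ⟨b, hb, hb1⟩ := ha
          rw [hS, Finset.mem_filter, Finset.mem_filter] at hb
          obtain ⟨⟨hbA, hbw⟩, hb2⟩ := hb
          have hbeq : b = (a, c) := Prod.ext hb1 hb2
          constructor
          · intro x hx
            rw [Finset.mem_image] at hx
            obtain ⟨p, hp, rfl⟩ := hx
            have hcell := hfib_cell (a, c) hp
            rw [Finset.mem_product] at hcell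
            exact hcell.2
          · rw [hwide, hbeq] at hbw
            exact hbw
        · rintro ⟨K, hKsub, hKcard, cl, ch, hbnd, hord, htr⟩
          apply hfree
          set iso := K.orderIsoOfFin hKcard with hiso
          refine ⟨fun a => (iso a : ℕ) * w, fun a => (iso a : ℕ) * w + (w - 1),
            cl, ch, ?_, ?_, ?_, ?_, ?_⟩
          · intro a; simp only []; omega
          · intro a b hab
            simp only []
            have hlt : (iso a : ℕ) < (iso b : ℕ) := by
              have h1 : iso a < iso b := iso.strictMono hab
              exact_mod_cast h1
            have h1 : ((iso a : ℕ) + 1) * w ≤ (iso b : ℕ) * w :=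
              Nat.mul_le_mul_right _ (by omega)
            have e : ((iso a : ℕ) + 1) * w = (iso a : ℕ) * w + w := by ring
            omega
          · intro b; exact (hbnd b).2.1
          · intro b b' h; exact hord b b' h
          · intro a b
            have hmemK : ((iso a : ℕ)) ∈ K := (iso a).2
            obtain ⟨x, hx, hx1, hx2⟩ := htr _ hmemK b
            rw [Finset.mem_image] at hx
            obtain ⟨p, hp, rfl⟩ := hx
            have hcell := hfib_cell ((iso a : ℕ), c) hp
            simp only [Finset.mem_product, Finset.mem_Ico] at hcell
            have hpM : p ∈ M := Finset.mem_of_mem_filter _ hp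
            refine ⟨p, hpM, ?_, ?_, hx1, hx2⟩ <;> simp only [] <;> omega
      calc ∑ c ∈ Finset.range m', ((A'.filter wide).filter (fun b => b.2 = c)).card
          ≤ ∑ _c ∈ Finset.range m', Fk := Finset.sum_le_sum hstrip
      _ = m' * Fk := by rw [Finset.sum_const, smul_eq_mul, Finset.card_range]
    have htall_count : (A'.filter tall).card ≤ m' * Fk := by
      have hcells : ∀ b ∈ A'.filter tall, b.1 ∈ Finset.range m' := by
        intro b hb
        have := hA'box (Finset.mem_of_mem_filter b hb)
        rw [cellbox, Finset.mem_product] at this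
        exact this.1
      rw [Finset.card_eq_sum_card_fiberwise hcells]
      have hstrip : ∀ c ∈ Finset.range m',
          ((A'.filter tall).filter (fun b => b.1 = c)).card ≤ Fk := by
        intro c _
        set S := (A'.filter tall).filter (fun b => b.1 = c) with hS
        have hinj : (S.image Prod.snd).card = S.card := by
          apply Finset.card_image_of_injOn
          intro b hb b' hb' heq
          simp only [Finset.mem_coe, hS, Finset.mem_filter] at hb hb'
          exact Prod.ext (hb.2.trans hb'.2.symm) heq
        rw [← hinj]
        apply tall_lemma k hk (2*k+2) k s0 (c*w) (c*w + w)
          (fun a => (fib (c, a)).image Prod.fst) (S.image Prod.snd)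
          (by omega) (le_refl _) (by rw [Nat.add_sub_cancel_left])
        · intro a ha
          rw [Finset.mem_image] at ha
          obtain ⟨b, hb, hb1⟩ := ha
          rw [hS, Finset.mem_filter, Finset.mem_filter] at hb
          obtain ⟨⟨hbA, hbw⟩, hb2⟩ := hb
          have hbeq : b = (c, a) := Prod.ext hb2 hb1
          constructor
          · intro x hx
            rw [Finset.mem_image] at hx
            obtain ⟨p, hp, rfl⟩ := hx
            have hcell := hfib_cell (c, a) hp
            rw [Finset.mem_product] at hcell
            exact hcell.1
          · rw [htall, hbeq] at hbw
            exact hbw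
        · rintro ⟨K, hKsub, hKcard, cl, ch, hbnd, hord, htr⟩
          apply hfree
          set iso := K.orderIsoOfFin hKcard with hiso
          refine ⟨cl, ch, fun a => (iso a : ℕ) * w, fun a => (iso a : ℕ) * w + (w - 1),
            ?_, ?_, ?_, ?_, ?_⟩
          · intro b; exact (hbnd b).2.1
          · intro b b' h; exact hord b b' h
          · intro a; simp only []; omega
          · intro a b hab
            simp only []
            have hlt : (iso a : ℕ) < (iso b : ℕ) := by
              have h1 : iso a < iso b := iso.strictMono hab
              exact_mod_cast h1
            have h1 : ((iso a : ℕ) + 1) * w ≤ (iso b : ℕ) * w :=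
              Nat.mul_le_mul_right _ (by omega)
            have e : ((iso a : ℕ) + 1) * w = (iso a : ℕ) * w + w := by ring
            omega
          · intro a b
            have hmemK : ((iso b : ℕ)) ∈ K := (iso b).2
            obtain ⟨x, hx, hx1, hx2⟩ := htr _ hmemK a
            rw [Finset.mem_image] at hx
            obtain ⟨p, hp, rfl⟩ := hx
            have hcell := hfib_cell (c, (iso b : ℕ)) hp
            simp only [Finset.mem_product, Finset.mem_Ico] at hcell
            have hpM : p ∈ M := Finset.mem_of_mem_filter _ hp
            refine ⟨p, hpM, hx1, hx2, ?_, ?_⟩ <;> simp only [] <;> omega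
      calc ∑ c ∈ Finset.range m', ((A'.filter tall).filter (fun b => b.1 = c)).card
          ≤ ∑ _c ∈ Finset.range m', Fk := Finset.sum_le_sum hstrip
      _ = m' * Fk := by rw [Finset.sum_const, smul_eq_mul, Finset.card_range]
    -- assemble
    have hsplit : M.card = ∑ b ∈ A'.filter (fun b => wide b ∨ tall b), (fib b).card
        + ∑ b ∈ A'.filter (fun b => ¬(wide b ∨ tall b)), (fib b).card := by
      rw [hsum, Finset.sum_filter_add_sum_filter_not]
    have hbig : ∑ b ∈ A'.filter (fun b => wide b ∨ tall b), (fib b).card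
        ≤ 4 * (Fk * (w * n)) := by
      calc ∑ b ∈ A'.filter (fun b => wide b ∨ tall b), (fib b).card
          ≤ ∑ _b ∈ A'.filter (fun b => wide b ∨ tall b), w * w :=
            Finset.sum_le_sum (fun b _ => hfib_le b)
      _ = (A'.filter (fun b => wide b ∨ tall b)).card * (w * w) := by
            rw [Finset.sum_const, smul_eq_mul]
      _ ≤ ((A'.filter wide).card + (A'.filter tall).card) * (w * w) := by
            apply Nat.mul_le_mul_right
            rw [Finset.filter_or]
            exact Finset.card_union_le _ _
      _ ≤ (m' * Fk + m' * Fk) * (w * w) := by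
            apply Nat.mul_le_mul_right
            omega
      _ = Fk * w * (m' * w) * 2 := by ring
      _ ≤ Fk * w * (2 * n) * 2 := by
            apply Nat.mul_le_mul_right
            exact Nat.mul_le_mul_left _ hm'w
      _ = 4 * (Fk * (w * n)) := by ring
    have hsmall : ∑ b ∈ A'.filter (fun b => ¬(wide b ∨ tall b)), (fib b).card
        ≤ A'.card * (s0 * s0) := by
      calc ∑ b ∈ A'.filter (fun b => ¬(wide b ∨ tall b)), (fib b).card
          ≤ ∑ _b ∈ A'.filter (fun b => ¬(wide b ∨ tall b)), s0 * s0 := by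
            apply Finset.sum_le_sum
            intro b hb
            rw [Finset.mem_filter] at hb
            push_neg at hb
            exact hfib_small b hb.2.1 hb.2.2
      _ = (A'.filter (fun b => ¬(wide b ∨ tall b))).card * (s0 * s0) := by
            rw [Finset.sum_const, smul_eq_mul]
      _ ≤ A'.card * (s0 * s0) :=
            Nat.mul_le_mul_right _ (Finset.card_filter_le _ _)
    -- final arithmetic
    have hfin : 4 * (A'.card * (s0 * s0)) ≤ 2 * (ck k * n) := by
      calc 4 * (A'.card * (s0 * s0)) = A'.card * (4 * (s0 * s0)) := by ring
      _ = A'.card * w := by rw [hw4]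
      _ ≤ (ck k * m') * w := Nat.mul_le_mul_right _ hA'card
      _ = ck k * (m' * w) := by ring
      _ ≤ ck k * (2 * n) := Nat.mul_le_mul_left _ hm'w
      _ = 2 * (ck k * n) := by ring
    have h8 : 8 * (Fk * (w * n)) = ck k * n := by rw [hckdef]; ring
    omega

noncomputable def SSet (k N m : ℕ) : Finset (Finset (ℕ × ℕ)) :=
  @Finset.filter _ (fun M => ¬ NMino k M ∧ M.card ≤ N) (Classical.decPred _)
    (cellbox m).powerset

lemma sset_mem {k N m : ℕ} {M : Finset (ℕ × ℕ)} :
    M ∈ SSet k N m ↔ M ⊆ cellbox m ∧ ¬ NMino k M ∧ M.card ≤ N := by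
  classical
  rw [SSet]
  rw [Finset.filter_congr_decidable]
  rw [Finset.mem_filter, Finset.mem_powerset]

/-- one contraction step for the count -/
lemma count_step (k N m : ℕ) (hk : 2 ≤ k) (hm : 1 ≤ m) :
    (SSet k N m).card ≤
      16 ^ (min N (ck k * ((m + 1) / 2))) * (SSet k N ((m + 1) / 2)).card := by
  classical
  set m' := (m + 1) / 2 with hm'
  set f : Finset (ℕ × ℕ) → Finset (ℕ × ℕ) :=
    fun M => M.image (fun p => (p.1 / 2, p.2 / 2)) with hf
  set μ := min N (ck k * m') with hμ
  have himg : (SSet k N m).image f ⊆ SSet k N m' := by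
    intro B hB
    rw [Finset.mem_image] at hB
    obtain ⟨M, hM, rfl⟩ := hB
    rw [sset_mem] at hM ⊢
    obtain ⟨hbox, hfree, hcard⟩ := hM
    refine ⟨?_, ?_, le_trans (Finset.card_image_le) hcard⟩
    · intro b hb
      rw [hf, Finset.mem_image] at hb
      obtain ⟨p, hp, rfl⟩ := hb
      have := hbox hp
      rw [cellbox, Finset.mem_product, Finset.mem_range, Finset.mem_range] at this ⊢
      constructor
      · show p.1 / 2 < m'; omega
      · show p.2 / 2 < m'; omega
    · exact fun h => hfree (nmino_contr (by norm_num) h)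
  have hfiber : ∀ B ∈ (SSet k N m).image f,
      ((SSet k N m).filter (fun M => f M = B)).card ≤ 16 ^ μ := by
    intro B hB
    have hBmem := himg hB
    rw [sset_mem] at hBmem
    obtain ⟨hBbox, hBfree, hBcard⟩ := hBmem
    have hBmass : B.card ≤ ck k * m' := mass_lemma k hk m' B hBbox hBfree
    have hBμ : B.card ≤ μ := le_min hBcard hBmass
    set UB := B.biUnion (fun b =>
      ({(2*b.1, 2*b.2), (2*b.1, 2*b.2+1), (2*b.1+1, 2*b.2), (2*b.1+1, 2*b.2+1)} :
        Finset (ℕ × ℕ))) with hUB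
    have hUBcard : UB.card ≤ 4 * B.card := by
      rw [hUB]
      refine le_trans (Finset.card_biUnion_le) ?_
      have hb4 : ∀ b ∈ B, ({(2*b.1, 2*b.2), (2*b.1, 2*b.2+1), (2*b.1+1, 2*b.2),
          (2*b.1+1, 2*b.2+1)} : Finset (ℕ × ℕ)).card ≤ 4 := by
        intro b _
        refine le_trans (Finset.card_insert_le _ _) ?_
        refine le_trans (Nat.succ_le_succ (Finset.card_insert_le _ _)) ?_
        refine le_trans (Nat.succ_le_succ (Nat.succ_le_succ (Finset.card_insert_le _ _))) ?_
        simp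
      calc ∑ b ∈ B, ({(2*b.1, 2*b.2), (2*b.1, 2*b.2+1), (2*b.1+1, 2*b.2),
            (2*b.1+1, 2*b.2+1)} : Finset (ℕ × ℕ)).card
          ≤ ∑ _b ∈ B, 4 := Finset.sum_le_sum hb4
      _ = 4 * B.card := by rw [Finset.sum_const, smul_eq_mul]; ring
    have hsubUB : ∀ M ∈ (SSet k N m).filter (fun M => f M = B), M ⊆ UB := by
      intro M hM p hp
      rw [Finset.mem_filter] at hM
      obtain ⟨_, hfM⟩ := hM
      have hpB : (p.1 / 2, p.2 / 2) ∈ B := by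
        rw [← hfM, hf]
        exact Finset.mem_image_of_mem _ hp
      rw [hUB, Finset.mem_biUnion]
      refine ⟨(p.1 / 2, p.2 / 2), hpB, ?_⟩
      simp only [Finset.mem_insert, Finset.mem_singleton]
      have h1 : p.1 = 2 * (p.1 / 2) ∨ p.1 = 2 * (p.1 / 2) + 1 := by omega
      have h2 : p.2 = 2 * (p.2 / 2) ∨ p.2 = 2 * (p.2 / 2) + 1 := by omega
      rcases h1 with h1 | h1 <;> rcases h2 with h2 | h2
      · exact Or.inl (Prod.ext h1 h2)
      · exact Or.inr (Or.inl (Prod.ext h1 h2))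
      · exact Or.inr (Or.inr (Or.inl (Prod.ext h1 h2)))
      · exact Or.inr (Or.inr (Or.inr (Prod.ext h1 h2)))
    have : ((SSet k N m).filter (fun M => f M = B)) ⊆ UB.powerset := by
      intro M hM
      rw [Finset.mem_powerset]
      exact hsubUB M hM
    calc ((SSet k N m).filter (fun M => f M = B)).card ≤ UB.powerset.card :=
          Finset.card_le_card this
    _ = 2 ^ UB.card := Finset.card_powerset _
    _ ≤ 2 ^ (4 * B.card) := Nat.pow_le_pow_right (by norm_num) hUBcard
    _ ≤ 2 ^ (4 * μ) := Nat.pow_le_pow_right (by norm_num) (by omega)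
    _ = 16 ^ μ := by rw [show (16:ℕ) = 2^4 by norm_num, ← pow_mul]
  calc (SSet k N m).card ≤ 16 ^ μ * ((SSet k N m).image f).card :=
        Finset.card_le_mul_card_image _ _ hfiber
  _ ≤ 16 ^ μ * (SSet k N m').card :=
        Nat.mul_le_mul_left _ (Finset.card_le_card himg)

/-- exponent recursion -/
def Ebd (N c : ℕ) : ℕ → ℕ
  | 0 => 0
  | 1 => 0
  | (m+2) => 4 * min N (c * ((m+3)/2)) + Ebd N c ((m+3)/2)
  termination_by m => m
  decreasing_by omega

lemma count_all (k N : ℕ) (hk : 2 ≤ k) :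
    ∀ m, (SSet k N m).card ≤ 2 ^ (1 + Ebd N (ck k) m) := by
  intro m
  induction m using Nat.strong_induction_on with
  | _ m IH =>
  match m with
  | 0 =>
    calc (SSet k N 0).card ≤ (cellbox 0).powerset.card := by
          apply Finset.card_le_card
          intro M hM
          rw [sset_mem] at hM
          rw [Finset.mem_powerset]
          exact hM.1
    _ = 2 ^ (cellbox 0).card := Finset.card_powerset _
    _ ≤ 2 ^ (1 + Ebd N (ck k) 0) := by
        apply Nat.pow_le_pow_right (by norm_num)
        simp [cellbox]
  | 1 =>
    calc (SSet k N 1).card ≤ (cellbox 1).powerset.card := by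
          apply Finset.card_le_card
          intro M hM
          rw [sset_mem] at hM
          rw [Finset.mem_powerset]
          exact hM.1
    _ = 2 ^ (cellbox 1).card := Finset.card_powerset _
    _ ≤ 2 ^ (1 + Ebd N (ck k) 1) := by
        apply Nat.pow_le_pow_right (by norm_num)
        simp [cellbox]
  | (m+2) =>
    have hstep := count_step k N (m+2) hk (by omega)
    have hrec : (SSet k N ((m+3)/2)).card ≤ 2 ^ (1 + Ebd N (ck k) ((m+3)/2)) :=
      IH ((m+3)/2) (by omega)
    have h16 : (16:ℕ) = 2^4 := by norm_num
    calc (SSet k N (m+2)).card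
        ≤ 16 ^ (min N (ck k * ((m+3)/2))) * (SSet k N ((m+3)/2)).card := hstep
    _ ≤ 16 ^ (min N (ck k * ((m+3)/2))) * 2 ^ (1 + Ebd N (ck k) ((m+3)/2)) :=
        Nat.mul_le_mul_left _ hrec
    _ = 2 ^ (4 * min N (ck k * ((m+3)/2)) + (1 + Ebd N (ck k) ((m+3)/2))) := by
        rw [h16, ← pow_mul, ← pow_add]
    _ = 2 ^ (1 + Ebd N (ck k) (m+2)) := by
        have hE : Ebd N (ck k) (m+2) = 4 * min N (ck k * ((m+3)/2)) + Ebd N (ck k) ((m+3)/2) := by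
          simp [Ebd]
        rw [hE]
        ring_nf

lemma ebd_le_linear (N c : ℕ) : ∀ m, Ebd N c m ≤ 12 * (c * m) := by
  intro m
  induction m using Nat.strong_induction_on with
  | _ m IH =>
  match m with
  | 0 => simp [Ebd]
  | 1 => simp [Ebd]
  | (m+2) =>
    have hq : (m+3)/2 < m + 2 := by omega
    have h1 := IH ((m+3)/2) hq
    have hE : Ebd N c (m+2) = 4 * min N (c * ((m+3)/2)) + Ebd N c ((m+3)/2) := by
      simp [Ebd]
    rw [hE]
    have h2 : 4 * min N (c * ((m+3)/2)) ≤ 4 * (c * ((m+3)/2)) := by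
      have := min_le_right N (c * ((m+3)/2))
      omega
    have h3 : 16 * (c * ((m+3)/2)) ≤ 12 * (c * (m+2)) := by
      have h4 : 16 * ((m+3)/2) ≤ 12 * (m+2) := by omega
      calc 16 * (c * ((m+3)/2)) = c * (16 * ((m+3)/2)) := by ring
      _ ≤ c * (12 * (m+2)) := Nat.mul_le_mul_left _ h4
      _ = 12 * (c * (m+2)) := by ring
    omega

lemma ebd_step (N c m : ℕ) : Ebd N c m ≤ 4 * N + Ebd N c ((m+1)/2) := by
  match m with
  | 0 => simp [Ebd]
  | 1 => simp [Ebd]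
  | (m+2) =>
    have hE : Ebd N c (m+2) = 4 * min N (c * ((m+3)/2)) + Ebd N c ((m+3)/2) := by
      simp [Ebd]
    rw [hE, show m+2+1 = m+3 from rfl]
    have := min_le_left N (c * ((m+3)/2))
    omega

lemma ebd_iterate (N c : ℕ) : ∀ W m, Ebd N c m ≤ 4 * N * W + Ebd N c ((fun x => (x+1)/2)^[W] m) := by
  intro W
  induction W with
  | zero => intro m; simp
  | succ W ih =>
    intro m
    calc Ebd N c m ≤ 4 * N + Ebd N c ((m+1)/2) := ebd_step N c m
    _ ≤ 4 * N + (4 * N * W + Ebd N c ((fun x => (x+1)/2)^[W] ((m+1)/2))) := by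
        have := ih ((m+1)/2)
        omega
    _ = 4 * N * (W+1) + Ebd N c ((fun x => (x+1)/2)^[W] ((m+1)/2)) := by
        have harith : 4*N*(W+1) = 4*N + 4*N*W := by ring
        omega
    _ = 4 * N * (W+1) + Ebd N c ((fun x => (x+1)/2)^[W+1] m) := by
        rw [Function.iterate_succ_apply]

lemma halve_iterate : ∀ W m, (fun x => (x+1)/2)^[W] m ≤ m / 2 ^ W + 2 := by
  intro W
  induction W with
  | zero => intro m; simpa using Nat.le_add_right m 2
  | succ W ih =>
    intro m
    rw [Function.iterate_succ_apply']
    have h1 := ih m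
    have h2 : ((fun x => (x+1)/2)^[W] m + 1) / 2 ≤ (m / 2 ^ W + 3) / 2 := by omega
    have h3 : (m / 2 ^ W + 3) / 2 ≤ (m / 2 ^ W) / 2 + 2 := by omega
    have h4 : (m / 2 ^ W) / 2 = m / 2 ^ (W+1) := by
      rw [Nat.div_div_eq_div_mul, pow_succ]
    calc (fun x => (x+1)/2) ((fun x => (x+1)/2)^[W] m)
        = ((fun x => (x+1)/2)^[W] m + 1) / 2 := rfl
    _ ≤ m / 2 ^ (W+1) + 2 := by omega

lemma ck_le (k : ℕ) (hk : 2 ≤ k) : ck k ≤ 2 ^ (8 * k + 9) := by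
  have h1 := phi_le k (2*k+2) k
  have h2 : (k:ℕ) - 1 ≤ 2 ^ k := by
    have := Nat.lt_two_pow_self (n := k)
    omega
  have h3 : Phi k k (2*k+2) ≤ 2 ^ k * 4 ^ (2*k+2) * 2 ^ k := by
    calc Phi k k (2*k+2) ≤ (k-1) * 4 ^ (2*k+2) * 2 ^ k := h1
    _ ≤ 2 ^ k * 4 ^ (2*k+2) * 2 ^ k := by
        apply Nat.mul_le_mul_right
        exact Nat.mul_le_mul_right _ h2
  calc ck k = 8 * Phi k k (2*k+2) * 2 ^ (2*k+2) := rfl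
  _ ≤ 8 * (2 ^ k * 4 ^ (2*k+2) * 2 ^ k) * 2 ^ (2*k+2) := by
      apply Nat.mul_le_mul_right
      exact Nat.mul_le_mul_left _ h3
  _ = 2 ^ (8 * k + 9) := by
      rw [show (8:ℕ) = 2^3 by norm_num, show (4:ℕ) = 2^2 by norm_num, ← pow_mul]
      rw [← pow_add, ← pow_add, ← pow_add, ← pow_add]
      congr 1
      ring

/-- master counting bound -/
lemma master_count (k n : ℕ) (hk : 2 ≤ k) (hn : 2 ^ (50 * k) < n) :
    (SSet k n n).card ≤ 2 ^ (100 * k * n) := by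
  set c := ck k with hc
  set W := 8 * k + 9 with hW
  have hcW : c ≤ 2 ^ W := ck_le k hk
  have h1 : (SSet k n n).card ≤ 2 ^ (1 + Ebd n c n) := count_all k n hk n
  have h2 : Ebd n c n ≤ 4 * n * W + Ebd n c ((fun x => (x+1)/2)^[W] n) := ebd_iterate n c W n
  have h3 : Ebd n c ((fun x => (x+1)/2)^[W] n) ≤ 12 * (c * ((fun x => (x+1)/2)^[W] n)) :=
    ebd_le_linear n c _
  have h4 : (fun x => (x+1)/2)^[W] n ≤ n / 2 ^ W + 2 := halve_iterate W n
  have h5 : c * ((fun x => (x+1)/2)^[W] n) ≤ c * (n / 2 ^ W) + 2 * c := by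
    have h5a := Nat.mul_le_mul_left c h4
    have h5b : c * (n / 2 ^ W + 2) = c * (n / 2 ^ W) + 2 * c := by ring
    omega
  have h6 : c * (n / 2 ^ W) ≤ n := by
    calc c * (n / 2 ^ W) ≤ 2 ^ W * (n / 2 ^ W) := Nat.mul_le_mul_right _ hcW
    _ ≤ n := Nat.mul_div_le n (2^W)
  have h7 : 2 * c ≤ 2 ^ (8 * k + 10) := by
    calc 2 * c ≤ 2 * 2 ^ W := by omega
    _ = 2 ^ (8*k+10) := by rw [hW]; ring
  have h8 : 2 ^ (8 * k + 10) ≤ n := by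
    calc 2 ^ (8*k+10) ≤ 2 ^ (50 * k) := Nat.pow_le_pow_right (by norm_num) (by omega)
    _ ≤ n := le_of_lt hn
  -- total exponent
  have hexp : 1 + Ebd n c n ≤ 100 * k * n := by
    have hkn : n ≤ k * n := Nat.le_mul_of_pos_left n (by omega)
    have e1 : Ebd n c n ≤ 4 * n * W + 12 * (c * (n / 2^W) + 2*c) := by
      have := Nat.mul_le_mul_left 12 h5
      omega
    have e2 : 4 * n * W = 32 * (k*n) + 36 * n := by rw [hW]; ring
    have e3 : 12 * (c * (n / 2^W) + 2*c) ≤ 12 * n + 12 * n := by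
      have := le_trans h7 h8
      omega
    have e4 : 1 ≤ n := by
      have : 1 ≤ 2 ^ (50*k) := Nat.one_le_two_pow
      omega
    calc 1 + Ebd n c n ≤ 1 + (32 * (k*n) + 36*n) + (12*n + 12*n) := by omega
    _ ≤ 100 * (k * n) := by
        have h36 : 36 * n ≤ 36 * (k*n) := by
          have : n ≤ k*n := hkn
          omega
        have h24 : 12*n + 12*n ≤ 24 * (k*n) := by omega
        have h1' : 1 ≤ k*n := by
          have : 1*1 ≤ k*n := Nat.mul_le_mul (by omega) e4
          omega
        omega
    _ = 100 * k * n := by ring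
  calc (SSet k n n).card ≤ 2 ^ (1 + Ebd n c n) := h1
  _ ≤ 2 ^ (100 * k * n) := Nat.pow_le_pow_right (by norm_num) hexp

def psupp {n : ℕ} (σ : Equiv.Perm (Fin n)) : Finset (ℕ × ℕ) :=
  Finset.univ.image (fun i : Fin n => ((i : ℕ), (σ i : ℕ)))

lemma psupp_box {n : ℕ} (σ : Equiv.Perm (Fin n)) : psupp σ ⊆ cellbox n := by
  intro p hp
  rw [psupp, Finset.mem_image] at hp
  obtain ⟨i, _, rfl⟩ := hp
  rw [cellbox, Finset.mem_product, Finset.mem_range, Finset.mem_range]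
  exact ⟨i.2, (σ i).2⟩

lemma psupp_card {n : ℕ} (σ : Equiv.Perm (Fin n)) : (psupp σ).card = n := by
  rw [psupp, Finset.card_image_of_injective _ (fun i j h => ?_), Finset.card_univ,
    Fintype.card_fin]
  exact Fin.ext (congrArg Prod.fst h)

lemma psupp_inj {n : ℕ} : Function.Injective (psupp (n := n)) := by
  intro σ τ h
  apply Equiv.ext
  intro i
  have hmem : ((i : ℕ), (σ i : ℕ)) ∈ psupp τ := by
    rw [← h, psupp, Finset.mem_image]
    exact ⟨i, Finset.mem_univ _, rfl⟩
  rw [psupp, Finset.mem_image] at hmem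
  obtain ⟨j, _, hj⟩ := hmem
  have h1 : (j : ℕ) = (i : ℕ) := congrArg Prod.fst hj
  have h2 : ((τ j : ℕ)) = (σ i : ℕ) := congrArg Prod.snd hj
  have : j = i := Fin.ext h1
  rw [this] at h2
  exact Fin.ext h2.symm

lemma bridge {n k : ℕ} (σ : Equiv.Perm (Fin n)) (π : Equiv.Perm (Fin k))
    (h : NMino k (psupp σ)) : PermContains σ π := by
  obtain ⟨rl, rh, cl, ch, h1, h2, h3, h4, h5⟩ := h
  have hpts : ∀ a : Fin k, ∃ i : Fin n,
      rl a ≤ (i : ℕ) ∧ (i : ℕ) ≤ rh a ∧ cl (π a) ≤ (σ i : ℕ) ∧ (σ i : ℕ) ≤ ch (π a) := by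
    intro a
    obtain ⟨p, hp, hb1, hb2, hb3, hb4⟩ := h5 a (π a)
    rw [psupp, Finset.mem_image] at hp
    obtain ⟨i, _, rfl⟩ := hp
    exact ⟨i, hb1, hb2, hb3, hb4⟩
  choose x hx1 hx2 hx3 hx4 using hpts
  refine ⟨x, ?_, ?_⟩
  · intro a b hab
    have := h2 a b hab
    have : (x a : ℕ) < (x b : ℕ) := by
      have := hx2 a; have := hx1 b; omega
    exact this
  · intro i j
    constructor
    · intro hlt
      rcases lt_trichotomy (π i) (π j) with h | h | h
      · exact h
      · exfalso
        have : i = j := π.injective h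
        rw [this] at hlt
        exact lt_irrefl _ hlt
      · exfalso
        have hc := h4 _ _ h
        have l1 := hx3 i; have l2 := hx4 i; have l3 := hx3 j; have l4 := hx4 j
        have : (σ (x j) : ℕ) < (σ (x i) : ℕ) := by omega
        have hlt' : (σ (x i) : ℕ) < (σ (x j) : ℕ) := hlt
        omega
    · intro hlt
      have hc := h4 _ _ hlt
      have l1 := hx3 i; have l2 := hx4 i; have l3 := hx3 j; have l4 := hx4 j
      have : (σ (x i) : ℕ) < (σ (x j) : ℕ) := by omega
      exact this

lemma sp_le_sset (k n : ℕ) (π : Equiv.Perm (Fin k)) :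
    SP n π ≤ (SSet k n n).card := by
  have hinj : Function.Injective
      (fun σp : {σ : Equiv.Perm (Fin n) // ¬ PermContains σ π} =>
        (⟨psupp σp.1, by
          rw [sset_mem]
          refine ⟨psupp_box _, ?_, ?_⟩
          · exact fun hm => σp.2 (bridge _ π hm)
          · rw [psupp_card]⟩ :
          {M // M ∈ SSet k n n})) := by
    intro a b hab
    have := congrArg Subtype.val hab
    simp only at this
    exact Subtype.ext (psupp_inj this)
  calc SP n π ≤ Nat.card {M // M ∈ SSet k n n} := Nat.card_le_card_of_injective _ hinj
  _ = (SSet k n n).card := Nat.card_eq_finsetCard _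

lemma sp_le_factorial (k n : ℕ) (π : Equiv.Perm (Fin k)) :
    SP n π ≤ n.factorial := by
  calc SP n π ≤ Nat.card (Equiv.Perm (Fin n)) :=
        Nat.card_le_card_of_injective _ Subtype.val_injective
  _ = n.factorial := by
      rw [Nat.card_eq_fintype_card, Fintype.card_perm, Fintype.card_fin]

lemma sp_one (n : ℕ) (hn : 0 < n) (π : Equiv.Perm (Fin 1)) : SP n π = 0 := by
  have hall : ∀ σ : Equiv.Perm (Fin n), PermContains σ π := by
    intro σ
    refine ⟨fun _ => ⟨0, hn⟩, ?_, ?_⟩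
    · intro a b hab
      exact absurd hab (by rw [Subsingleton.elim a b]; exact lt_irrefl _)
    · intro i j
      rw [Subsingleton.elim i j]
      constructor
      · intro h; exact absurd h (lt_irrefl _)
      · intro h; exact absurd h (lt_irrefl _)
  have : IsEmpty {σ : Equiv.Perm (Fin n) // ¬ PermContains σ π} :=
    ⟨fun σp => σp.2 (hall σp.1)⟩
  rw [SP, Nat.card_of_isEmpty]

/-- the natural-number form of the final bound -/
lemma sp_nat_bound (k n : ℕ) (hk : 0 < k) (hn : 0 < n) (π : Equiv.Perm (Fin k)) :
    SP n π ≤ 2 ^ (100 * k * n) := by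
  rcases Nat.lt_or_ge k 2 with hk2 | hk2
  · -- k = 1
    have : k = 1 := by omega
    subst this
    rw [sp_one n hn π]
    exact Nat.zero_le _
  rcases le_or_gt n (2 ^ (50 * k)) with hsmall | hbig
  · calc SP n π ≤ n.factorial := sp_le_factorial k n π
    _ ≤ n ^ n := Nat.factorial_le_pow n
    _ ≤ (2 ^ (50 * k)) ^ n := Nat.pow_le_pow_left hsmall n
    _ = 2 ^ (50 * k * n) := by rw [← pow_mul]
    _ ≤ 2 ^ (100 * k * n) := Nat.pow_le_pow_right (by norm_num) (by nlinarith)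
  · calc SP n π ≤ (SSet k n n).card := sp_le_sset k n π
    _ ≤ 2 ^ (100 * k * n) := master_count k n hk2 hbig


end SWAux

/-- There is an absolute constant `C > 0` such that for every
positive integer `k`, every `k`-permutation `π` and every positive integer `n`,
`S_n(π) ≤ 2^{C·k·n}`. -/
theorem stmt3 :
    ∃ C : ℝ, 0 < C ∧ ∀ k : ℕ, 0 < k → ∀ π : Equiv.Perm (Fin k), ∀ n : ℕ, 0 < n →
      (SP n π : ℝ) ≤ (2 : ℝ) ^ (C * (k : ℝ) * (n : ℝ)) := by
  refine ⟨100, by norm_num, ?_⟩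
  intro k hk π n hn
  have hnat := SWAux.sp_nat_bound k n hk hn π
  have hcast : ((SP n π : ℕ) : ℝ) ≤ ((2 ^ (100 * k * n) : ℕ) : ℝ) := by
    exact_mod_cast hnat
  refine le_trans hcast ?_
  have h1 : ((2 ^ (100 * k * n) : ℕ) : ℝ) = (2 : ℝ) ^ (100 * k * n : ℕ) := by
    push_cast; ring
  rw [h1]
  have h2 : (100 : ℝ) * (k : ℝ) * (n : ℝ) = ((100 * k * n : ℕ) : ℝ) := by
    push_cast; ring
  rw [h2, Real.rpow_natCast]
end

section
/- Let r and ℓ be positive integers and q a real number with 0 < q < 1/2 and 3 ≤ r ≤ qℓ/4, and let N = 2^r. Then there exists an N×N binary matrix M with mass at least (1−q)^{(r+1)²}·N² − 1 that avoids J_ℓ as an interval minor. -/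
open Filter

/- ===== auxiliary machinery for stmt6 ===== -/

namespace Stmt6Aux

lemma sum_prod_bool {ι : Type*} [Fintype ι] [DecidableEq ι] (g : ι → Bool → ℝ) :
    ∑ ξ : ι → Bool, ∏ i, g i (ξ i) = ∏ i, (g i true + g i false) := by
  classical
  have h := Finset.prod_univ_sum (fun _ : ι => (Finset.univ : Finset Bool)) g
  simp only [Fintype.sum_bool] at h
  rw [h, Fintype.piFinset_univ]

variable (r : ℕ)

def blk (a : Fin (r+1)) (x : Fin (2^r)) : Fin (2^r) :=
  ⟨(x : ℕ) / 2^(r - (a:ℕ)), lt_of_le_of_lt (Nat.div_le_self _ _) x.isLt⟩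

abbrev I := Fin (r+1) × Fin (r+1) × Fin (2^r) × Fin (2^r)

def idx (a b : Fin (r+1)) (x y : Fin (2^r)) : I r := (a, b, blk r a x, blk r b y)

def Mmat (ξ : I r → Bool) : Fin (2^r) → Fin (2^r) → Bool :=
  fun x y => decide (∀ a b : Fin (r+1), ξ (idx r a b x y) = true)

def W (q : ℝ) (ξ : I r → Bool) : ℝ := ∏ i : I r, (if ξ i then 1 - q else q)

lemma sum_W_ind (q : ℝ) (T : Finset (I r)) :
    ∑ ξ : I r → Bool, W r q ξ * (if ∀ i ∈ T, ξ i = true then 1 else 0)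
      = (1-q) ^ T.card := by
  classical
  have key : ∀ ξ : I r → Bool, W r q ξ * (if ∀ i ∈ T, ξ i = true then 1 else 0)
      = ∏ i : I r, ((if ξ i then 1-q else q) * (if i ∈ T then (if ξ i then (1:ℝ) else 0) else 1)) := by
    intro ξ
    rw [Finset.prod_mul_distrib]
    congr 1
    rw [← Finset.prod_filter, Finset.filter_mem_eq_inter, Finset.univ_inter,
      Finset.prod_boole]
    simp
  simp only [key]
  rw [sum_prod_bool (fun i b => (if b then 1-q else q) * (if i ∈ T then (if b then (1:ℝ) else 0) else 1))]
  trans (∏ x : I r, if x ∈ T then (1-q) else 1)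
  · exact Finset.prod_congr rfl fun i _ => by by_cases h : i ∈ T <;> simp [h]
  · rw [← Finset.prod_filter, Finset.filter_mem_eq_inter, Finset.univ_inter, Finset.prod_const]

lemma sum_W (q : ℝ) : ∑ ξ : I r → Bool, W r q ξ = 1 := by
  have h := sum_W_ind r q ∅
  simpa using h

lemma W_nonneg {q : ℝ} (hq0 : 0 ≤ q) (hq1 : q ≤ 1) (ξ : I r → Bool) : 0 ≤ W r q ξ :=
  Finset.prod_nonneg fun i _ => by by_cases h : ξ i <;> simp [h] <;> linarith


def Tent (x y : Fin (2^r)) : Finset (I r) :=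
  Finset.univ.image (fun ab : Fin (r+1) × Fin (r+1) => idx r ab.1 ab.2 x y)

lemma Tent_card (x y : Fin (2^r)) : (Tent r x y).card = (r+1)^2 := by
  have hinj : Function.Injective (fun ab : Fin (r+1) × Fin (r+1) => idx r ab.1 ab.2 x y) := by
    intro a b hab
    simp only [idx, Prod.mk.injEq] at hab
    exact Prod.ext hab.1 hab.2.1
  rw [Tent, Finset.card_image_of_injective _ hinj, Finset.card_univ]
  simp [sq]

lemma entry_event (ξ : I r → Bool) (x y : Fin (2^r)) :
    ((if Mmat r ξ x y = true then (1:ℝ) else 0))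
      = (if ∀ i ∈ Tent r x y, ξ i = true then 1 else 0) := by
  congr 1
  simp only [Mmat, decide_eq_true_eq, Tent, Finset.mem_image, Finset.mem_univ, true_and,
    eq_iff_iff]
  constructor
  · rintro h i ⟨ab, rfl⟩; exact h ab.1 ab.2
  · intro h a b; exact h _ ⟨(a,b), rfl⟩

lemma mass_eq_sum (ξ : I r → Bool) :
    ((mass (Mmat r ξ) : ℝ)) = ∑ p : Fin (2^r) × Fin (2^r),
      (if Mmat r ξ p.1 p.2 = true then (1:ℝ) else 0) := by
  rw [mass, Finset.card_filter]
  push_cast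
  rfl

lemma Emass (q : ℝ) :
    ∑ ξ : I r → Bool, W r q ξ * (mass (Mmat r ξ) : ℝ)
      = (1-q) ^ ((r+1)^2) * ((2^r : ℕ) : ℝ)^2 := by
  classical
  simp only [mass_eq_sum, Finset.mul_sum]
  rw [Finset.sum_comm]
  have : ∀ p : Fin (2^r) × Fin (2^r),
      ∑ ξ : I r → Bool, W r q ξ * (if Mmat r ξ p.1 p.2 = true then (1:ℝ) else 0)
        = (1-q) ^ ((r+1)^2) := by
    intro p
    simp only [entry_event]
    rw [sum_W_ind, Tent_card]
  rw [Finset.sum_congr rfl fun p _ => this p, Finset.sum_const, Finset.card_univ]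
  simp [sq]
  ring


def lev (lo hi : Fin (2^r)) : ℕ :=
  Nat.findGreatest (fun a => (lo : ℕ) / 2^(r-a) = (hi:ℕ) / 2^(r-a)) r

lemma lev_le (lo hi : Fin (2^r)) : lev r lo hi ≤ r := Nat.findGreatest_le r

lemma lev_spec (lo hi : Fin (2^r)) :
    (lo:ℕ)/2^(r - lev r lo hi) = (hi:ℕ)/2^(r - lev r lo hi) := by
  have h0 : (lo:ℕ)/2^(r-0) = (hi:ℕ)/2^(r-0) := by
    rw [Nat.sub_zero, Nat.div_eq_of_lt lo.isLt, Nat.div_eq_of_lt hi.isLt]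
  exact Nat.findGreatest_spec (P := fun a => (lo : ℕ) / 2^(r-a) = (hi:ℕ) / 2^(r-a))
    (Nat.zero_le r) h0

lemma lev_max (lo hi : Fin (2^r)) {a : ℕ} (ha : lev r lo hi < a) (har : a ≤ r) :
    (lo:ℕ)/2^(r-a) ≠ (hi:ℕ)/2^(r-a) :=
  Nat.findGreatest_is_greatest (P := fun a => (lo : ℕ) / 2^(r-a) = (hi:ℕ) / 2^(r-a)) ha har

lemma half_lemma {A B : ℕ} (hAB : A ≤ B) (hne : A ≠ B) (hhalf : A/2 = B/2) :
    B = 2*(A/2)+1 ∧ A = 2*(A/2) := by omega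

lemma fingerprint_inj {lo hi lo' hi' : Fin (2^r)}
    (h1 : (lo:ℕ) ≤ hi) (h2 : (hi:ℕ) < lo') (h3 : (lo':ℕ) ≤ hi')
    (he : lev r lo hi = lev r lo' hi')
    (hb : (lo:ℕ)/2^(r - lev r lo hi) = (lo':ℕ)/2^(r - lev r lo' hi')) : False := by
  set a := lev r lo hi with ha
  have har : a ≤ r := lev_le r lo hi
  have hs1 := lev_spec r lo hi
  have hs2 := lev_spec r lo' hi'
  rw [← ha] at hs1
  rw [← he] at hs2 hb
  rcases eq_or_lt_of_le har with hra | hra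
  · have h0 : r - a = 0 := by omega
    rw [h0, pow_zero, Nat.div_one] at hs1 hs2 hb
    omega
  · set d := 2^(r - a - 1) with hdd
    have hd : 0 < d := Nat.pow_pos (by norm_num)
    have hsplit : 2^(r-a) = d * 2 := by
      rw [hdd, ← pow_succ]
      congr 1
      omega
    have hdd1 : ∀ x : ℕ, x / 2^(r-a) = (x / d) / 2 := by
      intro x; rw [hsplit, Nat.div_div_eq_div_mul]
    rw [hdd1, hdd1] at hs1 hs2 hb
    have hsub : r - (a+1) = r - a - 1 := by omega
    have hn1 : (lo:ℕ)/d ≠ (hi:ℕ)/d := by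
      have := lev_max r lo hi (Nat.lt_succ_self a) hra
      rwa [hsub] at this
    have hn2 : (lo':ℕ)/d ≠ (hi':ℕ)/d := by
      have := lev_max r lo' hi' (show lev r lo' hi' < a + 1 by omega) hra
      rwa [hsub] at this
    have hm1 : (lo:ℕ)/d ≤ (hi:ℕ)/d := Nat.div_le_div_right h1
    have hm2 : (lo':ℕ)/d ≤ (hi':ℕ)/d := Nat.div_le_div_right h3
    obtain ⟨hB1, hA1⟩ := half_lemma hm1 hn1 hs1
    obtain ⟨hB2, hA2⟩ := half_lemma hm2 hn2 hs2
    -- hi ≥ (hi/d)*d and lo' < (lo'/d + 1)*d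
    have hhi : ((hi:ℕ)/d) * d ≤ hi := Nat.div_mul_le_self _ _
    have hlo' : (lo':ℕ) < ((lo':ℕ)/d + 1) * d := by
      rw [← Nat.div_lt_iff_lt_mul hd]
      omega
    -- lo'/d = 2u, hi/d = 2u+1 with same u
    have : (lo':ℕ)/d + 1 ≤ (hi:ℕ)/d := by omega
    have : ((lo':ℕ)/d + 1) * d ≤ ((hi:ℕ)/d) * d := Nat.mul_le_mul_right d this
    omega


def levF (lo hi : Fin (2^r)) : Fin (r+1) := ⟨lev r lo hi, Nat.lt_succ_of_le (lev_le r lo hi)⟩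

def fp (lo hi : Fin (2^r)) : Fin (r+1) × Fin (2^r) :=
  (levF r lo hi, blk r (levF r lo hi) lo)

lemma fp_inj {ℓ : ℕ} {f g : Fin ℓ → Fin (2^r)} (h1 : ∀ i, f i ≤ g i)
    (h2 : ∀ i j, i < j → g i < f j) :
    Function.Injective (fun i => fp r (f i) (g i)) := by
  intro i j hij
  by_contra hne
  rcases lt_trichotomy i j with h | h | h
  · simp only [fp, levF, Prod.mk.injEq, Fin.mk.injEq] at hij
    obtain ⟨hlev, hblk⟩ := hij
    have hblk' : (f i : ℕ) / 2^(r - lev r (f i) (g i)) = (f j : ℕ) / 2^(r - lev r (f j) (g j)) := by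
      have := congrArg Fin.val hblk
      simpa [blk, levF] using this
    exact fingerprint_inj r (h1 i) (h2 i j h) (h1 j) hlev hblk'
  · exact hne h
  · simp only [fp, levF, Prod.mk.injEq, Fin.mk.injEq] at hij
    obtain ⟨hlev, hblk⟩ := hij
    have hblk' : (f j : ℕ) / 2^(r - lev r (f j) (g j)) = (f i : ℕ) / 2^(r - lev r (f i) (g i)) := by
      have := congrArg Fin.val hblk
      exact (by simpa [blk, levF] using this : (f i : ℕ) / 2^(r - lev r (f i) (g i)) = (f j : ℕ) / 2^(r - lev r (f j) (g j))).symm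
    exact fingerprint_inj r (h1 j) (h2 j i h) (h1 i) hlev.symm hblk'

def Tsys {ℓ : ℕ} (rlo rhi clo chi : Fin ℓ → Fin (2^r)) : Finset (I r) :=
  Finset.univ.image (fun p : Fin ℓ × Fin ℓ =>
    ((fp r (rlo p.1) (rhi p.1)).1, (fp r (clo p.2) (chi p.2)).1,
     (fp r (rlo p.1) (rhi p.1)).2, (fp r (clo p.2) (chi p.2)).2))

lemma Tsys_card {ℓ : ℕ} (rlo rhi clo chi : Fin ℓ → Fin (2^r))
    (hr1 : ∀ a, rlo a ≤ rhi a) (hr2 : ∀ a b, a < b → rhi a < rlo b)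
    (hc1 : ∀ a, clo a ≤ chi a) (hc2 : ∀ a b, a < b → chi a < clo b) :
    (Tsys r rlo rhi clo chi).card = ℓ^2 := by
  have hrow := fp_inj r hr1 hr2
  have hcol := fp_inj r hc1 hc2
  have hinj : Function.Injective (fun p : Fin ℓ × Fin ℓ =>
      ((fp r (rlo p.1) (rhi p.1)).1, (fp r (clo p.2) (chi p.2)).1,
       (fp r (rlo p.1) (rhi p.1)).2, (fp r (clo p.2) (chi p.2)).2)) := by
    intro p p' hpp
    simp only [Prod.mk.injEq] at hpp
    have e1 : fp r (rlo p.1) (rhi p.1) = fp r (rlo p'.1) (rhi p'.1) :=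
      Prod.ext hpp.1 hpp.2.2.1
    have e2 : fp r (clo p.2) (chi p.2) = fp r (clo p'.2) (chi p'.2) :=
      Prod.ext hpp.2.1 hpp.2.2.2
    exact Prod.ext (hrow e1) (hcol e2)
  rw [Tsys, Finset.card_image_of_injective _ hinj, Finset.card_univ]
  simp [sq]

lemma blk_squeeze {a : Fin (r+1)} {lo x hi : Fin (2^r)} (hlx : lo ≤ x) (hxh : x ≤ hi)
    (hlh : (lo:ℕ)/2^(r-(a:ℕ)) = (hi:ℕ)/2^(r-(a:ℕ))) : blk r a x = blk r a lo := by
  apply Fin.ext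
  simp only [blk]
  have l1 : (lo:ℕ)/2^(r-(a:ℕ)) ≤ (x:ℕ)/2^(r-(a:ℕ)) := Nat.div_le_div_right hlx
  have l2 : (x:ℕ)/2^(r-(a:ℕ)) ≤ (hi:ℕ)/2^(r-(a:ℕ)) := Nat.div_le_div_right hxh
  omega

lemma contains_subset {ℓ : ℕ} (ξ : I r → Bool) (rlo rhi clo chi : Fin ℓ → Fin (2^r))
    (hcont : ∀ a b : Fin ℓ, J ℓ ℓ a b = true → ∃ i j, rlo a ≤ i ∧ i ≤ rhi a ∧
      clo b ≤ j ∧ j ≤ chi b ∧ Mmat r ξ i j = true) :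
    ∀ i ∈ Tsys r rlo rhi clo chi, ξ i = true := by
  intro i hi
  rw [Tsys, Finset.mem_image] at hi
  obtain ⟨p, -, rfl⟩ := hi
  obtain ⟨x, y, hx1, hx2, hy1, hy2, hM⟩ := hcont p.1 p.2 rfl
  rw [Mmat, decide_eq_true_eq] at hM
  have := hM (fp r (rlo p.1) (rhi p.1)).1 (fp r (clo p.2) (chi p.2)).1
  rw [idx] at this
  rwa [blk_squeeze r hx1 hx2 (lev_spec r (rlo p.1) (rhi p.1)),
    blk_squeeze r hy1 hy2 (lev_spec r (clo p.2) (chi p.2))] at this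


open scoped Classical in
lemma bad_sum_le {ℓ : ℕ} {q : ℝ} (hq0 : 0 ≤ q) (hq1 : q ≤ 1) :
    ∑ ξ ∈ Finset.univ.filter (fun ξ : I r → Bool => IntervalMinor (J ℓ ℓ) (Mmat r ξ)), W r q ξ
      ≤ ((2^r : ℕ) : ℝ)^(4*ℓ) * (1-q)^(ℓ^2) := by
  classical
  set Sys := ((Fin ℓ → Fin (2^r)) × (Fin ℓ → Fin (2^r)) × (Fin ℓ → Fin (2^r)) × (Fin ℓ → Fin (2^r)))
  set Val : Finset Sys :=
    Finset.univ.filter (fun s : Sys => (∀ a, s.1 a ≤ s.2.1 a) ∧ (∀ a b, a < b → s.2.1 a < s.1 b) ∧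
      (∀ a, s.2.2.1 a ≤ s.2.2.2 a) ∧ (∀ a b, a < b → s.2.2.2 a < s.2.2.1 b)) with hVal
  have hnn : ∀ (ξ : I r → Bool) (s : Sys), 0 ≤ W r q ξ *
      (if ∀ i ∈ Tsys r s.1 s.2.1 s.2.2.1 s.2.2.2, ξ i = true then (1:ℝ) else 0) := by
    intro ξ s
    apply mul_nonneg (W_nonneg r hq0 hq1 ξ)
    split <;> norm_num
  have step1 : ∀ ξ ∈ Finset.univ.filter (fun ξ : I r → Bool => IntervalMinor (J ℓ ℓ) (Mmat r ξ)),
      W r q ξ ≤ ∑ s ∈ Val, W r q ξ *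
        (if ∀ i ∈ Tsys r s.1 s.2.1 s.2.2.1 s.2.2.2, ξ i = true then (1:ℝ) else 0) := by
    intro ξ hξ
    rw [Finset.mem_filter] at hξ
    obtain ⟨rlo, rhi, clo, chi, hA, hB, hC, hD, hE⟩ := hξ.2
    have hmem : ((rlo, rhi, clo, chi) : Sys) ∈ Val := by
      rw [hVal, Finset.mem_filter]
      exact ⟨Finset.mem_univ _, hA, hB, hC, hD⟩
    have := Finset.single_le_sum (f := fun s : Sys => W r q ξ *
        (if ∀ i ∈ Tsys r s.1 s.2.1 s.2.2.1 s.2.2.2, ξ i = true then (1:ℝ) else 0))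
      (fun s _ => hnn ξ s) hmem
    have h2 : W r q ξ * (if ∀ i ∈ Tsys r rlo rhi clo chi, ξ i = true then (1:ℝ) else 0) ≤
        ∑ s ∈ Val, W r q ξ *
          (if ∀ i ∈ Tsys r s.1 s.2.1 s.2.2.1 s.2.2.2, ξ i = true then (1:ℝ) else 0) := this
    rwa [if_pos (contains_subset r ξ rlo rhi clo chi hE), mul_one] at h2
  calc ∑ ξ ∈ Finset.univ.filter (fun ξ : I r → Bool => IntervalMinor (J ℓ ℓ) (Mmat r ξ)), W r q ξ
      ≤ ∑ ξ ∈ Finset.univ.filter (fun ξ : I r → Bool => IntervalMinor (J ℓ ℓ) (Mmat r ξ)),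
        ∑ s ∈ Val, W r q ξ *
          (if ∀ i ∈ Tsys r s.1 s.2.1 s.2.2.1 s.2.2.2, ξ i = true then (1:ℝ) else 0) :=
        Finset.sum_le_sum step1
    _ = ∑ s ∈ Val, ∑ ξ ∈ Finset.univ.filter (fun ξ : I r → Bool => IntervalMinor (J ℓ ℓ) (Mmat r ξ)),
        W r q ξ * (if ∀ i ∈ Tsys r s.1 s.2.1 s.2.2.1 s.2.2.2, ξ i = true then (1:ℝ) else 0) :=
        Finset.sum_comm
    _ ≤ ∑ s ∈ Val, ∑ ξ : I r → Bool,
        W r q ξ * (if ∀ i ∈ Tsys r s.1 s.2.1 s.2.2.1 s.2.2.2, ξ i = true then (1:ℝ) else 0) := by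
        apply Finset.sum_le_sum
        intro s _
        exact Finset.sum_le_sum_of_subset_of_nonneg (Finset.filter_subset _ _)
          (fun ξ _ _ => hnn ξ s)
    _ = ∑ s ∈ Val, (1-q)^(ℓ^2) := by
        apply Finset.sum_congr rfl
        intro s hs
        rw [hVal, Finset.mem_filter] at hs
        obtain ⟨-, hA, hB, hC, hD⟩ := hs
        rw [sum_W_ind, Tsys_card r s.1 s.2.1 s.2.2.1 s.2.2.2 hA hB hC hD]
    _ ≤ ((2^r : ℕ) : ℝ)^(4*ℓ) * (1-q)^(ℓ^2) := by
        rw [Finset.sum_const, nsmul_eq_mul]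
        apply mul_le_mul_of_nonneg_right _ (pow_nonneg (by linarith) _)
        have hcard : (Val.card : ℝ) ≤ (Fintype.card Sys : ℝ) := by
          exact_mod_cast Finset.card_le_card (Finset.subset_univ _) |>.trans (le_of_eq (Finset.card_univ))
        apply hcard.trans
        have : Fintype.card Sys = ((2^r)^ℓ)^4 := by
          simp [Sys, Fintype.card_fun]
          ring
        rw [this]
        norm_cast
        rw [← pow_mul]
        ring_nf
        exact le_refl _


lemma two_le_exp : (2:ℝ) ≤ Real.exp 0.75 := by
  have e1 : (2.7182818283 : ℝ) < Real.exp 1 := Real.exp_one_gt_d9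
  have e2 : (1:ℝ) - 0.25 ≤ Real.exp (-0.25) := by
    have := Real.add_one_le_exp (-0.25 : ℝ); linarith
  have h : Real.exp 0.75 = Real.exp 1 * Real.exp (-0.25) := by
    rw [← Real.exp_add]; norm_num
  rw [h]
  nlinarith [Real.exp_pos (-0.25 : ℝ), Real.exp_pos (1:ℝ)]
set_option maxHeartbeats 1000000 in
lemma numeric {r ℓ : ℕ} {q : ℝ} (hq0 : 0 < q) (hq1 : q < 1/2) (hr3 : 3 ≤ r)
    (hrq : (r:ℝ) ≤ q * (ℓ:ℝ) / 4) :
    ((2^r : ℕ):ℝ)^2 * (((2^r : ℕ):ℝ)^(4*ℓ) * (1-q)^(ℓ^2)) ≤ 1 := by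
  have hl24 : (24:ℝ) < (ℓ:ℝ) := by
    have hr : (3:ℝ) ≤ (r:ℝ) := by exact_mod_cast hr3
    have hl0 : (0:ℝ) ≤ (ℓ:ℝ) := Nat.cast_nonneg _
    nlinarith
  have hcast : ((2^r : ℕ):ℝ) = (2:ℝ)^r := by push_cast; ring
  rw [hcast]
  have hpow : ((2:ℝ)^r)^2 * ((2:ℝ)^r)^(4*ℓ) = (2:ℝ)^(r*(4*ℓ+2)) := by
    rw [← pow_mul, ← pow_mul, ← pow_add]
    ring_nf
  have h2exp : (2:ℝ)^(r*(4*ℓ+2)) ≤ Real.exp (0.75 * (↑(r*(4*ℓ+2)) : ℝ)) := by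
    calc (2:ℝ)^(r*(4*ℓ+2)) ≤ (Real.exp 0.75)^(r*(4*ℓ+2)) :=
          pow_le_pow_left₀ (by norm_num) two_le_exp _
      _ = Real.exp ((↑(r*(4*ℓ+2)) : ℝ) * 0.75) := (Real.exp_nat_mul _ _).symm
      _ = Real.exp (0.75 * (↑(r*(4*ℓ+2)) : ℝ)) := by rw [mul_comm]
  have hqexp : (1-q)^(ℓ^2) ≤ Real.exp (-(q * ((ℓ^2 : ℕ) : ℝ))) := by
    calc (1-q)^(ℓ^2) ≤ (Real.exp (-q))^(ℓ^2) := by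
          apply pow_le_pow_left₀ (by linarith)
          have := Real.add_one_le_exp (-q); linarith
      _ = Real.exp (((ℓ^2:ℕ):ℝ) * (-q)) := (Real.exp_nat_mul _ _).symm
      _ = Real.exp (-(q * ((ℓ^2 : ℕ):ℝ))) := by ring_nf
  have hkey : 0.75 * ((↑(r*(4*ℓ+2)):ℝ)) - q * ((ℓ^2:ℕ):ℝ) ≤ 0 := by
    have h4r : 4*(r:ℝ) ≤ q * (ℓ:ℝ) := by linarith
    have hr : (3:ℝ) ≤ (r:ℝ) := by exact_mod_cast hr3
    push_cast
    nlinarith [mul_le_mul_of_nonneg_right h4r (le_of_lt (lt_trans (by norm_num) hl24))]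
  calc ((2:ℝ)^r)^2 * (((2:ℝ)^r)^(4*ℓ) * (1-q)^(ℓ^2))
      = (2:ℝ)^(r*(4*ℓ+2)) * (1-q)^(ℓ^2) := by rw [← hpow]; ring
    _ ≤ Real.exp (0.75 * (↑(r*(4*ℓ+2)):ℝ)) * Real.exp (-(q * ((ℓ^2 : ℕ):ℝ))) :=
        mul_le_mul h2exp hqexp (pow_nonneg (by linarith) _) (le_of_lt (Real.exp_pos _))
    _ = Real.exp (0.75 * (↑(r*(4*ℓ+2)):ℝ) + -(q * ((ℓ^2 : ℕ):ℝ))) := (Real.exp_add _ _).symm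
    _ ≤ Real.exp 0 := Real.exp_le_exp.mpr (by linarith)
    _ = 1 := Real.exp_zero


lemma mass_le (ξ : I r → Bool) : ((mass (Mmat r ξ) : ℝ)) ≤ ((2^r : ℕ):ℝ)^2 := by
  have h : mass (Mmat r ξ) ≤ 2^r * 2^r := by
    rw [mass]
    calc (Finset.univ.filter fun p : Fin (2^r) × Fin (2^r) => Mmat r ξ p.1 p.2 = true).card
        ≤ (Finset.univ : Finset (Fin (2^r) × Fin (2^r))).card := Finset.card_filter_le _ _
      _ = 2^r * 2^r := by simp
  calc ((mass (Mmat r ξ) : ℝ)) ≤ ((2^r * 2^r : ℕ) : ℝ) := by exact_mod_cast h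
    _ = ((2^r : ℕ):ℝ)^2 := by push_cast; ring

lemma M0_false (x y : Fin (2^r)) : Mmat r (fun _ => false) x y = false := by
  rw [Mmat]
  apply decide_eq_false
  intro h
  exact absurd (h 0 0) (by simp)

end Stmt6Aux


open Stmt6Aux in
open scoped Classical in
/-- Let `r, ℓ` be positive integers and `q` a real with
`0 < q < 1/2` and `3 ≤ r ≤ qℓ/4`, and let `N = 2^r`. Then there is an `N × N`
binary matrix `M` with mass at least `(1−q)^{(r+1)²}·N² − 1` that avoids `J_ℓ`
as an interval minor. -/
theorem stmt6 (r ℓ : ℕ) (q : ℝ) (hl : 0 < ℓ) (hq0 : 0 < q) (hq1 : q < 1 / 2)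
    (hr3 : 3 ≤ r) (hrq : (r : ℝ) ≤ q * (ℓ : ℝ) / 4) :
    ∃ M : Fin (2 ^ r) → Fin (2 ^ r) → Bool,
      (1 - q) ^ ((r + 1) ^ 2) * ((2 ^ r : ℕ) : ℝ) ^ 2 - 1 ≤ (mass M : ℝ) ∧
      ¬ IntervalMinor (J ℓ ℓ) M := by
  have hq1' : q ≤ 1 := by linarith
  by_contra hcon
  push_neg at hcon
  set B : ℝ := (1 - q) ^ ((r + 1) ^ 2) * ((2 ^ r : ℕ) : ℝ) ^ 2 with hBdef
  have hM0mass : mass (Mmat r (fun _ => false)) = 0 := by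
    rw [mass, Finset.card_eq_zero]
    ext p
    simp [M0_false]
  have hM0avoid : ¬ IntervalMinor (J ℓ ℓ) (Mmat r (fun _ => false)) := by
    rintro ⟨rlo, rhi, clo, chi, -, -, -, -, hE⟩
    obtain ⟨x, y, -, -, -, -, hM⟩ := hE ⟨0, hl⟩ ⟨0, hl⟩ rfl
    rw [M0_false] at hM
    exact Bool.false_ne_true hM
  have hB1 : 1 < B := by
    by_contra hB
    push_neg at hB
    apply hM0avoid
    apply hcon
    rw [hM0mass]
    norm_num
    linarith
  set bad := Finset.univ.filter
    (fun ξ : I r → Bool => IntervalMinor (J ℓ ℓ) (Mmat r ξ)) with hbaddef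
  set s := ∑ ξ ∈ bad, W r q ξ with hsdef
  have hs0 : 0 ≤ s :=
    Finset.sum_nonneg fun ξ _ => W_nonneg r hq0.le hq1' ξ
  have hsN : ((2 ^ r : ℕ) : ℝ) ^ 2 * s ≤ 1 := by
    calc ((2 ^ r : ℕ) : ℝ) ^ 2 * s
        ≤ ((2 ^ r : ℕ) : ℝ) ^ 2 * (((2 ^ r : ℕ) : ℝ) ^ (4 * ℓ) * (1 - q) ^ (ℓ ^ 2)) :=
          mul_le_mul_of_nonneg_left (bad_sum_le r hq0.le hq1') (by positivity)
      _ ≤ 1 := numeric hq0 hq1 hr3 hrq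
  have hsplit := Finset.sum_filter_add_sum_filter_not Finset.univ
    (fun ξ : I r → Bool => IntervalMinor (J ℓ ℓ) (Mmat r ξ))
    (fun ξ => W r q ξ * (mass (Mmat r ξ) : ℝ))
  have hWsplit := Finset.sum_filter_add_sum_filter_not Finset.univ
    (fun ξ : I r → Bool => IntervalMinor (J ℓ ℓ) (Mmat r ξ))
    (fun ξ => W r q ξ)
  have hEm : ∑ ξ : I r → Bool, W r q ξ * (mass (Mmat r ξ) : ℝ) = B := Emass r q
  have hW1 : ∑ ξ : I r → Bool, W r q ξ = 1 := sum_W r q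
  have hgoodW : ∑ ξ ∈ Finset.univ.filter
      (fun ξ : I r → Bool => ¬ IntervalMinor (J ℓ ℓ) (Mmat r ξ)), W r q ξ = 1 - s := by
    rw [hW1] at hWsplit
    rw [hsdef, hbaddef]
    linarith [hWsplit]
  have hbadmass : ∑ ξ ∈ bad, W r q ξ * (mass (Mmat r ξ) : ℝ)
      ≤ ((2 ^ r : ℕ) : ℝ) ^ 2 * s := by
    rw [hsdef, Finset.mul_sum]
    apply Finset.sum_le_sum
    intro ξ _
    calc W r q ξ * (mass (Mmat r ξ) : ℝ)
        ≤ W r q ξ * ((2 ^ r : ℕ) : ℝ) ^ 2 :=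
          mul_le_mul_of_nonneg_left (mass_le r ξ) (W_nonneg r hq0.le hq1' ξ)
      _ = ((2 ^ r : ℕ) : ℝ) ^ 2 * W r q ξ := mul_comm _ _
  have hgoodmass : ∑ ξ ∈ Finset.univ.filter
      (fun ξ : I r → Bool => ¬ IntervalMinor (J ℓ ℓ) (Mmat r ξ)),
      W r q ξ * (mass (Mmat r ξ) : ℝ) ≤ (B - 1) * (1 - s) := by
    have h1 : ∀ ξ ∈ Finset.univ.filter
        (fun ξ : I r → Bool => ¬ IntervalMinor (J ℓ ℓ) (Mmat r ξ)),
        W r q ξ * (mass (Mmat r ξ) : ℝ) ≤ W r q ξ * (B - 1) := by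
      intro ξ hξ
      rw [Finset.mem_filter] at hξ
      have hlt : (mass (Mmat r ξ) : ℝ) < B - 1 := by
        by_contra hge
        push_neg at hge
        exact hξ.2 (hcon _ hge)
      exact mul_le_mul_of_nonneg_left hlt.le (W_nonneg r hq0.le hq1' ξ)
    calc ∑ ξ ∈ Finset.univ.filter
          (fun ξ : I r → Bool => ¬ IntervalMinor (J ℓ ℓ) (Mmat r ξ)),
          W r q ξ * (mass (Mmat r ξ) : ℝ)
        ≤ ∑ ξ ∈ Finset.univ.filter
          (fun ξ : I r → Bool => ¬ IntervalMinor (J ℓ ℓ) (Mmat r ξ)),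
          W r q ξ * (B - 1) := Finset.sum_le_sum h1
      _ = (∑ ξ ∈ Finset.univ.filter
          (fun ξ : I r → Bool => ¬ IntervalMinor (J ℓ ℓ) (Mmat r ξ)),
          W r q ξ) * (B - 1) := (Finset.sum_mul _ _ _).symm
      _ = (B - 1) * (1 - s) := by rw [hgoodW]; ring
  have hcomb : B ≤ ((2 ^ r : ℕ) : ℝ) ^ 2 * s + (B - 1) * (1 - s) := by
    rw [hEm] at hsplit
    linarith [hbadmass, hgoodmass, hsplit]
  have hexp : (B - 1) * (1 - s) = (B - 1) - (B - 1) * s := by ring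
  rw [hexp] at hcomb
  rcases eq_or_lt_of_le hs0 with h0 | h0
  · rw [← h0] at hcomb hsN
    simp at hcomb
    linarith
  · have hpos : 0 < (B - 1) * s := mul_pos (by linarith) h0
    linarith
end

section
/- There is an absolute constant c > 0 such that for every integer k ≥ 2 there exist a k-permutation π, a positive integer N with N ≥ 2^{c·k^{1/12}}, and an N×N binary matrix M whose mass is at least (1 − k^{−1/4})·N² and which avoids π. -/
open Filter

namespace Stmt10

open Finset

/-- Window set at scale `α`, index `u`, clipped to `[0,N)`. -/
def wSet (N : ℕ) (p : ℕ × ℕ) : Finset ℕ :=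
  (Finset.range N).filter (fun x => p.2 * 2^p.1 ≤ x ∧ x < p.2 * 2^p.1 + 2^(p.1+1))

lemma wSet_card_le (N : ℕ) (p : ℕ × ℕ) : (wSet N p).card ≤ 2^(p.1+1) := by
  have h : wSet N p ⊆ Finset.Ico (p.2 * 2^p.1) (p.2 * 2^p.1 + 2^(p.1+1)) := by
    intro x hx
    simp only [wSet, mem_filter, mem_range] at hx
    exact Finset.mem_Ico.2 ⟨hx.2.1, hx.2.2⟩
  calc (wSet N p).card ≤ _ := Finset.card_le_card h
    _ ≤ 2^(p.1+1) := by simp [Nat.card_Ico]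

lemma mem_wSet {N : ℕ} {p : ℕ × ℕ} {x : ℕ} :
    x ∈ wSet N p ↔ x < N ∧ p.2 * 2^p.1 ≤ x ∧ x < p.2 * 2^p.1 + 2^(p.1+1) := by
  simp [wSet, mem_filter, mem_range, and_assoc]

lemma sum_wSet_card (N α : ℕ) : ∑ u : Fin N, (wSet N (α, (u:ℕ))).card ≤ 2 * N := by
  have hcard : ∀ u : Fin N, (wSet N (α, (u:ℕ))).card =
      ∑ x ∈ Finset.range N, if ((u:ℕ) * 2^α ≤ x ∧ x < (u:ℕ) * 2^α + 2^(α+1)) then 1 else 0 := by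
    intro u
    rw [wSet, Finset.card_filter]
  calc ∑ u : Fin N, (wSet N (α, (u:ℕ))).card
      = ∑ u : Fin N, ∑ x ∈ Finset.range N,
          if ((u:ℕ) * 2^α ≤ x ∧ x < (u:ℕ) * 2^α + 2^(α+1)) then 1 else 0 := by
        exact Finset.sum_congr rfl (fun u _ => hcard u)
    _ = ∑ x ∈ Finset.range N, ∑ u : Fin N,
          if ((u:ℕ) * 2^α ≤ x ∧ x < (u:ℕ) * 2^α + 2^(α+1)) then 1 else 0 := Finset.sum_comm
    _ ≤ ∑ _x ∈ Finset.range N, 2 := by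
        apply Finset.sum_le_sum
        intro x hx
        have hx' : x < N := Finset.mem_range.1 hx
        have hpos : 0 < 2^α := Nat.pow_pos (by norm_num)
        -- the set of valid u's is contained in {x/2^α, x/2^α - 1}
        have : ∑ u : Fin N, (if ((u:ℕ) * 2^α ≤ x ∧ x < (u:ℕ) * 2^α + 2^(α+1)) then 1 else 0)
            = (Finset.univ.filter (fun u : Fin N => (u:ℕ) * 2^α ≤ x ∧ x < (u:ℕ) * 2^α + 2^(α+1))).card := by
          rw [Finset.card_filter]
        rw [this]
        have hd : x / 2^α < N := lt_of_le_of_lt (Nat.div_le_self _ _) hx'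
        have hsub : (Finset.univ.filter (fun u : Fin N => (u:ℕ) * 2^α ≤ x ∧ x < (u:ℕ) * 2^α + 2^(α+1)))
            ⊆ {⟨x / 2^α, hd⟩, ⟨x / 2^α - 1, by omega⟩} := by
          intro u hu
          simp only [Finset.mem_filter, Finset.mem_univ, true_and] at hu
          have h1 : (u:ℕ) ≤ x / 2^α := by
            rw [Nat.le_div_iff_mul_le hpos]; exact hu.1
          have h2 : x / 2^α < (u:ℕ) + 2 := by
            rw [Nat.div_lt_iff_lt_mul hpos]
            calc x < (u:ℕ) * 2^α + 2^(α+1) := hu.2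
              _ = ((u:ℕ) + 2) * 2^α := by rw [add_mul, pow_succ]; ring
          simp only [Finset.mem_insert, Finset.mem_singleton]
          rcases Nat.lt_or_ge (u:ℕ) (x / 2^α) with h | h
          · right; apply Fin.ext; simp; omega
          · left; apply Fin.ext; simp; omega
        calc _ ≤ ({⟨x / 2^α, hd⟩, ⟨x / 2^α - 1, by omega⟩} : Finset (Fin N)).card :=
              Finset.card_le_card hsub
          _ ≤ 2 := Finset.card_insert_le _ _ |>.trans (by simp)
    _ = 2 * N := by simp [mul_comm]


lemma mem_wSet' {N κ u x : ℕ} :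
    x ∈ wSet N (κ, u) ↔ x < N ∧ u * 2^κ ≤ x ∧ x < u * 2^κ + 2^(κ+1) := mem_wSet


/-- `(a+1)^n ≥ a^n + n·a^(n-1)` for `n ≥ 1`. -/
lemma pow_succ_base_ge (a : ℕ) : ∀ n : ℕ, 1 ≤ n → a^n + n * a^(n-1) ≤ (a+1)^n := by
  intro n
  induction n with
  | zero => intro h; omega
  | succ n ih =>
    intro _
    rcases Nat.eq_zero_or_pos n with hn | hn
    · subst hn; simp
    · have h1 := ih hn
      have key : a^(n-1) * a = a^n := by rw [← pow_succ]; congr 1; omega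
      have expand : (a^n + n * a^(n-1)) * (a+1) = a^(n+1) + a^n + n * a^n + n * a^(n-1) := by
        have haa : a^n * a = a^(n+1) := by rw [← pow_succ]
        calc (a^n + n * a^(n-1)) * (a+1)
            = a^n * a + a^n + n * (a^(n-1) * a) + n * a^(n-1) := by ring
          _ = a^(n+1) + a^n + n * a^n + n * a^(n-1) := by rw [haa, key]
      have hrw : n + 1 - 1 = n := by omega
      rw [hrw]
      calc a^(n+1) + (n+1) * a^n = a^(n+1) + a^n + n * a^n := by ring
        _ ≤ (a^n + n * a^(n-1)) * (a+1) := by rw [expand]; omega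
        _ ≤ (a+1)^n * (a+1) := by gcongr
        _ = (a+1)^(n+1) := (pow_succ _ _).symm

/-- `2·(q-1)^q ≤ q^q` for `q ≥ 2`. -/
lemma two_mul_pred_pow_le (q : ℕ) (hq : 2 ≤ q) : 2 * (q-1)^q ≤ q^q := by
  have h := pow_succ_base_ge (q-1) q (by omega)
  have hrw : q - 1 + 1 = q := by omega
  rw [hrw] at h
  have h2 : (q-1)^q ≤ q * (q-1)^(q-1) := by
    calc (q-1)^q = (q-1)^(q-1) * (q-1) := by
          rw [← pow_succ]; congr 1; omega
      _ ≤ (q-1)^(q-1) * q := by gcongr; omega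
      _ = q * (q-1)^(q-1) := by ring
  omega

/-- The key union-bound inequality: `2^M · (q-1)^T ≤ q^T` when `q·M ≤ T`. -/
lemma key_pow_ineq (q M T : ℕ) (hq : 2 ≤ q) (hMT : q * M ≤ T) :
    2^M * (q-1)^T ≤ q^T := by
  have h1 : 2^M * (q-1)^(q*M) ≤ q^(q*M) := by
    calc 2^M * (q-1)^(q*M) = (2 * (q-1)^q)^M := by
          rw [mul_pow, ← pow_mul, mul_comm q M]
      _ ≤ (q^q)^M := Nat.pow_le_pow_left (two_mul_pred_pow_le q hq) M
      _ = q^(q*M) := by rw [← pow_mul, mul_comm q M]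
  calc 2^M * (q-1)^T = 2^M * (q-1)^(q*M) * (q-1)^(T - q*M) := by
        rw [mul_assoc, ← pow_add]; congr 2; omega
    _ ≤ q^(q*M) * q^(T - q*M) := by
        have h2 : (q-1)^(T - q*M) ≤ q^(T - q*M) := Nat.pow_le_pow_left (by omega) _
        exact Nat.mul_le_mul h1 h2
    _ = q^T := by rw [← pow_add]; congr 1; omega


section Families

variable {t : ℕ} (lo hi : Fin t → ℕ)

/-- Sum of interval lengths of disjoint ordered intervals inside `T`. -/
lemma sum_len_le (S : Finset (Fin t)) (T : Finset ℕ)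
    (hord : ∀ a b : Fin t, a < b → hi a < lo b)
    (hsub : ∀ a ∈ S, Finset.Icc (lo a) (hi a) ⊆ T) :
    ∑ a ∈ S, (hi a + 1 - lo a) ≤ T.card := by
  have hdisj : ∀ x ∈ S, ∀ y ∈ S, x ≠ y →
      Disjoint (Finset.Icc (lo x) (hi x)) (Finset.Icc (lo y) (hi y)) := by
    intro x _ y _ hxy
    rcases lt_trichotomy x y with h | h | h
    · rw [Finset.disjoint_left]
      intro z hz hz'
      simp only [Finset.mem_Icc] at hz hz'
      have := hord x y h; omega
    · exact absurd h hxy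
    · rw [Finset.disjoint_left]
      intro z hz hz'
      simp only [Finset.mem_Icc] at hz hz'
      have := hord y x h; omega
  calc ∑ a ∈ S, (hi a + 1 - lo a) = ∑ a ∈ S, (Finset.Icc (lo a) (hi a)).card := by
        apply Finset.sum_congr rfl; intro a _; rw [Nat.card_Icc]
    _ = (S.biUnion (fun a => Finset.Icc (lo a) (hi a))).card := (Finset.card_biUnion hdisj).symm
    _ ≤ T.card := Finset.card_le_card (by
        intro x hx
        rcases Finset.mem_biUnion.1 hx with ⟨a, ha, hxa⟩
        exact hsub a ha hxa)

variable {m s : ℕ}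

/-- The small-interval set. -/
def smallSet (lam : ℕ) : Finset (Fin t) := univ.filter (fun a => hi a - lo a < 2^lam)

/-- The scale/window map. -/
def axisMap (lam m : ℕ) (a : Fin t) : Fin (lam+1) × Fin (2^m) :=
  (⟨min ((hi a - lo a).size) lam, by omega⟩,
   ⟨(lo a / 2 ^ ((hi a - lo a).size)) % 2^m, Nat.mod_lt _ (by positivity)⟩)

lemma smallSet_card (hs : 1 ≤ s) (hsm : s ≤ m + 1)
    (hle : ∀ a, lo a ≤ hi a) (hord : ∀ a b : Fin t, a < b → hi a < lo b)
    (hiN : ∀ a, hi a < 2^m) (ht : t = 2^s) :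
    2^(s-1) ≤ (smallSet lo hi (m+1-s)).card := by
  set lam := m + 1 - s with hlam
  have hsum : ∑ a : Fin t, (hi a + 1 - lo a) ≤ 2^m := by
    have := sum_len_le lo hi univ (Finset.range (2^m)) hord (by
      intro a _ x hx
      simp only [Finset.mem_Icc] at hx
      exact Finset.mem_range.2 (lt_of_le_of_lt hx.2 (hiN a)))
    simpa using this
  -- large intervals
  set L : Finset (Fin t) := univ.filter (fun a => ¬ (hi a - lo a < 2^lam)) with hL
  have hlarge : L.card * (2^lam + 1) ≤ 2^m := by
    calc L.card * (2^lam + 1) = ∑ _a ∈ L, (2^lam + 1) := by rw [Finset.sum_const, smul_eq_mul]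
      _ ≤ ∑ a ∈ L, (hi a + 1 - lo a) := by
          apply Finset.sum_le_sum
          intro a ha
          have := (Finset.mem_filter.1 ha).2
          have := hle a
          omega
      _ ≤ ∑ a : Fin t, (hi a + 1 - lo a) := Finset.sum_le_sum_of_subset (Finset.subset_univ L)
      _ ≤ 2^m := hsum
  have hpow : 2^lam * 2^(s-1) = 2^m := by
    rw [← pow_add]; congr 1; omega
  have hLcard : L.card ≤ 2^(s-1) := by
    by_contra hc
    push_neg at hc
    have h1 : (2^(s-1) + 1) * (2^lam + 1) ≤ L.card * (2^lam + 1) := by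
      apply Nat.mul_le_mul_right; omega
    nlinarith [pow_pos (show 0 < 2 by norm_num) lam, pow_pos (show 0 < 2 by norm_num) (s-1)]
  have hcompl : (smallSet lo hi lam).card = t - L.card := by
    have : (smallSet lo hi lam) = univ \ L := by
      ext a
      simp [smallSet, hL, Finset.mem_sdiff, Finset.mem_filter]
    rw [this, Finset.card_sdiff_of_subset (Finset.subset_univ L)]
    simp
  have ht2 : (2:ℕ)^s = 2^(s-1) + 2^(s-1) := by
    have h := pow_succ 2 (s-1)
    rw [Nat.sub_add_cancel hs] at h
    omega
  omega


lemma axisMap_eq_of_small {lam : ℕ} {a : Fin t} (ha : a ∈ smallSet lo hi lam)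
    (hiN : hi a < 2^m) (hle : lo a ≤ hi a) :
    ((axisMap lo hi lam m a).1 : ℕ) = (hi a - lo a).size ∧
    ((axisMap lo hi lam m a).2 : ℕ) = lo a / 2 ^ ((hi a - lo a).size) := by
  have hsmall : hi a - lo a < 2^lam := (Finset.mem_filter.1 ha).2
  have hsize : (hi a - lo a).size ≤ lam := Nat.size_le.2 hsmall
  constructor
  · simp [axisMap, min_eq_left hsize]
  · simp only [axisMap]
    exact Nat.mod_eq_of_lt (lt_of_le_of_lt (le_trans (Nat.div_le_self _ _) hle) hiN)

lemma axisMap_window {lam : ℕ} {a : Fin t} (ha : a ∈ smallSet lo hi lam)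
    (hiN : hi a < 2^m) (hle : lo a ≤ hi a) :
    ∀ x, lo a ≤ x → x ≤ hi a →
      x ∈ wSet (2^m) (((axisMap lo hi lam m a).1 : ℕ), ((axisMap lo hi lam m a).2 : ℕ)) := by
  intro x hx1 hx2
  obtain ⟨h1, h2⟩ := axisMap_eq_of_small lo hi ha hiN hle
  rw [h1, h2, mem_wSet']
  set κ := (hi a - lo a).size with hκ
  have hpos : 0 < 2^κ := Nat.pow_pos (by norm_num)
  have hdm := Nat.div_add_mod (lo a) (2^κ)
  have hmod : lo a % 2^κ < 2^κ := Nat.mod_lt _ hpos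
  have hlt : hi a - lo a < 2^κ := Nat.lt_size_self _
  have hp : (2:ℕ)^(κ+1) = 2^κ + 2^κ := by rw [pow_succ]; ring
  have hcomm : (lo a / 2^κ) * 2^κ = 2^κ * (lo a / 2^κ) := Nat.mul_comm _ _
  refine ⟨lt_of_le_of_lt hx2 hiN, ?_, ?_⟩
  · omega
  · omega

lemma fiber_card_le {lam : ℕ}
    (hle : ∀ a, lo a ≤ hi a) (hord : ∀ a b : Fin t, a < b → hi a < lo b)
    (hiN : ∀ a, hi a < 2^m) :
    ∀ b ∈ (smallSet lo hi lam).image (axisMap lo hi lam m),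
      ((smallSet lo hi lam).filter (fun a => axisMap lo hi lam m a = b)).card ≤ 4 := by
  intro b _
  set T := (smallSet lo hi lam).filter (fun a => axisMap lo hi lam m a = b) with hT
  have hmem : ∀ a ∈ T, (hi a - lo a).size = (b.1:ℕ) ∧ lo a / 2^(b.1:ℕ) = (b.2:ℕ) ∧
      Finset.Icc (lo a) (hi a) ⊆ Finset.Ico ((b.2:ℕ) * 2^(b.1:ℕ)) ((b.2:ℕ) * 2^(b.1:ℕ) + 2^((b.1:ℕ)+1)) := by
    intro a haT
    rw [hT, Finset.mem_filter] at haT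
    obtain ⟨haS, hab⟩ := haT
    obtain ⟨h1, h2⟩ := axisMap_eq_of_small lo hi haS (hiN a) (hle a)
    rw [hab] at h1 h2
    refine ⟨h1.symm, by rw [h1]; exact h2.symm, ?_⟩
    intro x hx
    simp only [Finset.mem_Icc] at hx
    have hw := axisMap_window lo hi haS (hiN a) (hle a) x hx.1 hx.2
    rw [hab] at hw
    rw [mem_wSet'] at hw
    exact Finset.mem_Ico.2 ⟨hw.2.1, hw.2.2⟩
  have hsum : ∑ a ∈ T, (hi a + 1 - lo a) ≤ 2^((b.1:ℕ)+1) := by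
    have := sum_len_le lo hi T (Finset.Ico ((b.2:ℕ) * 2^(b.1:ℕ)) ((b.2:ℕ) * 2^(b.1:ℕ) + 2^((b.1:ℕ)+1))) hord
      (fun a ha => (hmem a ha).2.2)
    calc ∑ a ∈ T, (hi a + 1 - lo a) ≤ _ := this
      _ ≤ 2^((b.1:ℕ)+1) := by simp [Nat.card_Ico]
  rcases Nat.eq_zero_or_pos (b.1:ℕ) with h0 | hα1
  · have hlen : ∀ a ∈ T, hi a + 1 - lo a = 1 := by
      intro a ha
      have h := (hmem a ha).1
      rw [h0] at h
      have : hi a - lo a = 0 := Nat.size_eq_zero.1 h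
      have := hle a; omega
    have h2 : T.card * 1 ≤ 2^((b.1:ℕ)+1) := by
      calc T.card * 1 = ∑ _a ∈ T, 1 := by simp
        _ = ∑ a ∈ T, (hi a + 1 - lo a) := Finset.sum_congr rfl (fun a ha => (hlen a ha).symm)
        _ ≤ 2^((b.1:ℕ)+1) := hsum
    rw [h0] at h2
    norm_num at h2
    omega
  · have hlen : ∀ a ∈ T, 2^((b.1:ℕ)-1) + 1 ≤ hi a + 1 - lo a := by
      intro a ha
      have h := (hmem a ha).1
      have h2 : 2^((b.1:ℕ)-1) ≤ hi a - lo a := by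
        rw [← Nat.lt_size, h]; omega
      have := hle a; omega
    have hcnt : T.card * (2^((b.1:ℕ)-1) + 1) ≤ 2^((b.1:ℕ)+1) := by
      calc T.card * (2^((b.1:ℕ)-1) + 1) = ∑ _a ∈ T, (2^((b.1:ℕ)-1)+1) := by
            rw [Finset.sum_const, smul_eq_mul]
        _ ≤ ∑ a ∈ T, (hi a + 1 - lo a) := Finset.sum_le_sum hlen
        _ ≤ 2^((b.1:ℕ)+1) := hsum
    have hpw : (2:ℕ)^((b.1:ℕ)+1) = 4 * 2^((b.1:ℕ)-1) := by
      have h3 : (b.1:ℕ) + 1 = ((b.1:ℕ) - 1) + 2 := by omega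
      rw [h3, pow_add]; ring
    nlinarith [pow_pos (show 0 < 2 by norm_num) ((b.1:ℕ)-1)]

lemma image_card_ge (hs : 3 ≤ s) (hsm : s ≤ m + 1)
    (hle : ∀ a, lo a ≤ hi a) (hord : ∀ a b : Fin t, a < b → hi a < lo b)
    (hiN : ∀ a, hi a < 2^m) (ht : t = 2^s)
    (hsmall : 2^(s-1) ≤ (smallSet lo hi (m+1-s)).card) :
    2^(s-3) ≤ ((smallSet lo hi (m+1-s)).image (axisMap lo hi (m+1-s) m)).card := by
  have hmul := Finset.card_le_mul_card_image (smallSet lo hi (m+1-s)) 4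
    (fiber_card_le lo hi hle hord hiN)
  have h4 : (2:ℕ)^(s-1) = 4 * 2^(s-3) := by
    have : s - 1 = (s-3) + 2 := by omega
    rw [this, pow_add]; ring
  omega

end Families

lemma prod_bound {q P Ω T : ℕ} (hTP : T ≤ P) (hPΩ : P ≤ Ω) :
    (q-1)^P * q^(Ω-P) ≤ (q-1)^T * q^(Ω-T) := by
  calc (q-1)^P * q^(Ω-P) = (q-1)^T * (q-1)^(P-T) * q^(Ω-P) := by
        rw [← pow_add]
        congr 2
        omega
    _ ≤ (q-1)^T * q^(P-T) * q^(Ω-P) := by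
        have : (q-1)^(P-T) ≤ q^(P-T) := Nat.pow_le_pow_left (by omega) _
        exact Nat.mul_le_mul_right _ (Nat.mul_le_mul_left _ this)
    _ = (q-1)^T * q^(Ω-T) := by rw [mul_assoc, ← pow_add]; congr 2; omega

/-- The probabilistic core: existence of a sparse "zero set" `Z ⊆ [N]²` catching every
pair of families of `t` disjoint ordered intervals. -/
theorem core (m s q : ℕ) (hs : 3 ≤ s) (hsm : s ≤ m) (hq : 2 ≤ q)
    (hmain : q * (4 * 2^s * m + 3) ≤ 2^(2*s-6)) :
    ∃ Z : Finset (ℕ × ℕ),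
      q * Z.card ≤ 8 * (2^m)^2 * (m+2-s)^2 ∧
      ∀ lo hi lo' hi' : Fin (2^s) → Fin (2^m),
        (∀ a, (lo a : ℕ) ≤ (hi a : ℕ)) →
        (∀ a b, a < b → (hi a : ℕ) < (lo b : ℕ)) →
        (∀ a, (lo' a : ℕ) ≤ (hi' a : ℕ)) →
        (∀ a b, a < b → (hi' a : ℕ) < (lo' b : ℕ)) →
        ∃ a b : Fin (2^s), ∀ i j : ℕ,
          (lo a : ℕ) ≤ i → i ≤ (hi a : ℕ) → (lo' b : ℕ) ≤ j → j ≤ (hi' b : ℕ) →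
          (i, j) ∈ Z := by
  classical
  haveI : NeZero q := ⟨by omega⟩
  set N := 2^m with hN
  set t := 2^s with ht
  set lam := m + 1 - s with hlam
  have hlam1 : lam + 1 = m + 2 - s := by omega
  set w : (Fin (lam+1) × Fin N) × (Fin (lam+1) × Fin N) → ℕ :=
    fun p => (wSet N ((p.1.1:ℕ), (p.1.2:ℕ))).card * (wSet N ((p.2.1:ℕ), (p.2.2:ℕ))).card with hw
  -- total weight bound
  have hax : ∑ a : Fin (lam+1) × Fin N, (wSet N ((a.1:ℕ), (a.2:ℕ))).card ≤ (lam+1) * (2*N) := by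
    rw [Fintype.sum_prod_type]
    calc ∑ α : Fin (lam+1), ∑ u : Fin N, (wSet N ((α:ℕ), (u:ℕ))).card
        ≤ ∑ _α : Fin (lam+1), 2 * N := by
          apply Finset.sum_le_sum
          intro α _
          exact sum_wSet_card N (α:ℕ)
      _ = (lam+1) * (2*N) := by simp [mul_comm]
  have hwtot : ∑ p, w p ≤ 4 * N^2 * (lam+1)^2 := by
    calc ∑ p, w p
        = (∑ a : Fin (lam+1) × Fin N, (wSet N ((a.1:ℕ), (a.2:ℕ))).card) *
          (∑ a : Fin (lam+1) × Fin N, (wSet N ((a.1:ℕ), (a.2:ℕ))).card) := by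
          rw [Fintype.sum_prod_type]
          simp only [hw]
          rw [← Finset.sum_mul_sum]
      _ ≤ ((lam+1) * (2*N)) * ((lam+1) * (2*N)) := Nat.mul_le_mul hax hax
      _ = 4 * N^2 * (lam+1)^2 := by ring
  -- counting functions with a prescribed zero
  have hΩc : 2 ≤ Fintype.card ((Fin (lam+1) × Fin N) × (Fin (lam+1) × Fin N)) := by
    rw [Fintype.card_prod, Fintype.card_prod, Fintype.card_fin, Fintype.card_fin]
    have h1 : 2 ≤ N := by
      rw [hN]; calc 2 = 2^1 := rfl
        _ ≤ 2^m := Nat.pow_le_pow_right (by norm_num) (by omega)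
    have h2 : 2 ≤ (lam+1) * N := by
      calc 2 ≤ N := h1
        _ = 1 * N := (one_mul N).symm
        _ ≤ (lam+1) * N := Nat.mul_le_mul_right N (by omega)
    calc 2 ≤ (lam+1) * N := h2
      _ = (lam+1) * N * 1 := (mul_one _).symm
      _ ≤ (lam+1) * N * ((lam+1) * N) := Nat.mul_le_mul_left _ (by omega)
  have cntZero : ∀ p : (Fin (lam+1) × Fin N) × (Fin (lam+1) × Fin N),
      (univ.filter (fun F : (Fin (lam+1) × Fin N) × (Fin (lam+1) × Fin N) → Fin q => F p = 0)).card
      = q ^ (Fintype.card ((Fin (lam+1) × Fin N) × (Fin (lam+1) × Fin N)) - 1) := by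
    intro p
    have hqpos : 0 < q := by omega
    have heq : univ.filter (fun F : (Fin (lam+1) × Fin N) × (Fin (lam+1) × Fin N) → Fin q => F p = 0)
        = Fintype.piFinset (fun p' : (Fin (lam+1) × Fin N) × (Fin (lam+1) × Fin N) =>
            if p' = p then ({0} : Finset (Fin q)) else univ) := by
      ext F
      simp only [mem_filter, mem_univ, true_and, Fintype.mem_piFinset]
      constructor
      · intro h a
        by_cases hap : a = p
        · subst hap; simp [h]
        · simp [hap]
      · intro h
        have := h p
        simpa using this
    rw [heq, Fintype.card_piFinset]
    have : ∀ p' : (Fin (lam+1) × Fin N) × (Fin (lam+1) × Fin N),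
        (if p' = p then ({0} : Finset (Fin q)) else univ).card
        = if p' = p then 1 else q := by
      intro p'
      by_cases h : p' = p <;> simp [h]
    rw [Finset.prod_congr rfl (fun p' _ => this p')]
    rw [← Finset.mul_prod_erase univ _ (mem_univ p)]
    rw [if_pos rfl, one_mul]
    rw [Finset.prod_congr rfl (fun x hx => if_neg (Finset.ne_of_mem_erase hx))]
    rw [Finset.prod_const, Finset.card_erase_of_mem (mem_univ p), Finset.card_univ]
  -- the area of a choice function
  set area : ((Fin (lam+1) × Fin N) × (Fin (lam+1) × Fin N) → Fin q) → ℕ :=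
    fun F => ∑ p ∈ univ.filter (fun p => F p = 0), w p with harea
  set Ωc := Fintype.card ((Fin (lam+1) × Fin N) × (Fin (lam+1) × Fin N)) with hΩcdef
  have hsumarea : ∑ F : (Fin (lam+1) × Fin N) × (Fin (lam+1) × Fin N) → Fin q, area F
      ≤ 4 * N^2 * (lam+1)^2 * q ^ (Ωc - 1) := by
    calc ∑ F : (Fin (lam+1) × Fin N) × (Fin (lam+1) × Fin N) → Fin q, area F
        = ∑ F : (Fin (lam+1) × Fin N) × (Fin (lam+1) × Fin N) → Fin q,
            ∑ p, (if F p = 0 then w p else 0) := by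
          apply Finset.sum_congr rfl; intro F _
          rw [harea]
          exact Finset.sum_filter _ _
      _ = ∑ p, ∑ F : (Fin (lam+1) × Fin N) × (Fin (lam+1) × Fin N) → Fin q,
            (if F p = 0 then w p else 0) := Finset.sum_comm
      _ = ∑ p, (univ.filter (fun F : (Fin (lam+1) × Fin N) × (Fin (lam+1) × Fin N) → Fin q =>
            F p = 0)).card * w p := by
          apply Finset.sum_congr rfl; intro p _
          rw [← Finset.sum_filter, Finset.sum_const, smul_eq_mul]
      _ = ∑ p, q ^ (Ωc - 1) * w p := by
          apply Finset.sum_congr rfl; intro p _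
          rw [cntZero p]
      _ = q ^ (Ωc - 1) * ∑ p, w p := by rw [Finset.mul_sum]
      _ ≤ q ^ (Ωc - 1) * (4 * N^2 * (lam+1)^2) := Nat.mul_le_mul_left _ hwtot
      _ = 4 * N^2 * (lam+1)^2 * q ^ (Ωc - 1) := by ring
  -- functions with large area are few
  set Bad2 := (univ : Finset ((Fin (lam+1) × Fin N) × (Fin (lam+1) × Fin N) → Fin q)).filter
      (fun F => 8 * N^2 * (lam+1)^2 ≤ q * area F) with hBad2def
  have hX : 0 < N^2 * (lam+1)^2 := by positivity
  have hBad2 : 2 * Bad2.card ≤ q ^ Ωc := by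
    have h1 : Bad2.card * (8 * N^2 * (lam+1)^2) ≤ ∑ F ∈ Bad2, q * area F := by
      have := Finset.card_nsmul_le_sum Bad2 (fun F => q * area F) (8 * N^2 * (lam+1)^2)
        (fun F hF => (Finset.mem_filter.1 hF).2)
      simpa [smul_eq_mul] using this
    have h2 : ∑ F ∈ Bad2, q * area F ≤ 4 * N^2 * (lam+1)^2 * q ^ Ωc := by
      calc ∑ F ∈ Bad2, q * area F
          ≤ ∑ F : (Fin (lam+1) × Fin N) × (Fin (lam+1) × Fin N) → Fin q, q * area F :=
            Finset.sum_le_sum_of_subset (Finset.subset_univ _)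
        _ = q * ∑ F : (Fin (lam+1) × Fin N) × (Fin (lam+1) × Fin N) → Fin q, area F := by
            rw [Finset.mul_sum]
        _ ≤ q * (4 * N^2 * (lam+1)^2 * q ^ (Ωc - 1)) := Nat.mul_le_mul_left _ hsumarea
        _ = 4 * N^2 * (lam+1)^2 * (q * q ^ (Ωc - 1)) := by ring
        _ = 4 * N^2 * (lam+1)^2 * q ^ Ωc := by
            congr 1
            rw [← pow_succ']
            congr 1
            omega
    have h3 : (4 * (N^2 * (lam+1)^2)) * (2 * Bad2.card) ≤ (4 * (N^2 * (lam+1)^2)) * q ^ Ωc := by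
      calc (4 * (N^2 * (lam+1)^2)) * (2 * Bad2.card) = Bad2.card * (8 * N^2 * (lam+1)^2) := by ring
        _ ≤ ∑ F ∈ Bad2, q * area F := h1
        _ ≤ 4 * N^2 * (lam+1)^2 * q ^ Ωc := h2
        _ = (4 * (N^2 * (lam+1)^2)) * q ^ Ωc := by ring
    exact Nat.le_of_mul_le_mul_left h3 (by omega)
  -- escaping functions are few
  set T := 2^(2*s-6) with hT
  set nz := (univ : Finset (Fin q)).filter (fun x => x ≠ 0) with hnz
  have hnzcard : nz.card = q - 1 := by
    rw [hnz, Finset.filter_ne', Finset.card_erase_of_mem (mem_univ _), Finset.card_univ,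
      Fintype.card_fin]
  set Valid : ((Fin t → Fin N) × (Fin t → Fin N) × (Fin t → Fin N) × (Fin t → Fin N)) → Prop :=
    fun φ => (∀ a, (φ.1 a : ℕ) ≤ (φ.2.1 a : ℕ)) ∧
      (∀ a b, a < b → (φ.2.1 a : ℕ) < (φ.1 b : ℕ)) ∧
      (∀ a, (φ.2.2.1 a : ℕ) ≤ (φ.2.2.2 a : ℕ)) ∧
      (∀ a b, a < b → (φ.2.2.2 a : ℕ) < (φ.2.2.1 b : ℕ)) with hValid
  set Pset : ((Fin t → Fin N) × (Fin t → Fin N) × (Fin t → Fin N) × (Fin t → Fin N)) →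
      Finset ((Fin (lam+1) × Fin N) × (Fin (lam+1) × Fin N)) :=
    fun φ => ((smallSet (fun a => (φ.1 a : ℕ)) (fun a => (φ.2.1 a : ℕ)) lam).image
        (axisMap (fun a => (φ.1 a : ℕ)) (fun a => (φ.2.1 a : ℕ)) lam m)) ×ˢ
      ((smallSet (fun a => (φ.2.2.1 a : ℕ)) (fun a => (φ.2.2.2 a : ℕ)) lam).image
        (axisMap (fun a => (φ.2.2.1 a : ℕ)) (fun a => (φ.2.2.2 a : ℕ)) lam m)) with hPset
  set BadSet : ((Fin t → Fin N) × (Fin t → Fin N) × (Fin t → Fin N) × (Fin t → Fin N)) →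
      Finset ((Fin (lam+1) × Fin N) × (Fin (lam+1) × Fin N) → Fin q) :=
    fun φ => Fintype.piFinset (fun p => if p ∈ Pset φ then nz else univ) with hBadSet
  have hlamm : lam = m + 1 - s := hlam
  have hPcard : ∀ φ, Valid φ → T ≤ (Pset φ).card := by
    intro φ hφ
    obtain ⟨h1, h2, h3, h4⟩ := hφ
    have hr : 2^(s-3) ≤ ((smallSet (fun a => (φ.1 a : ℕ)) (fun a => (φ.2.1 a : ℕ)) lam).image
        (axisMap (fun a => (φ.1 a : ℕ)) (fun a => (φ.2.1 a : ℕ)) lam m)).card := by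
      rw [hlamm]
      exact image_card_ge _ _ hs (by omega) h1 h2 (fun a => (φ.2.1 a).isLt) ht
        (smallSet_card _ _ (by omega) (by omega) h1 h2 (fun a => (φ.2.1 a).isLt) ht)
    have hc : 2^(s-3) ≤ ((smallSet (fun a => (φ.2.2.1 a : ℕ)) (fun a => (φ.2.2.2 a : ℕ)) lam).image
        (axisMap (fun a => (φ.2.2.1 a : ℕ)) (fun a => (φ.2.2.2 a : ℕ)) lam m)).card := by
      rw [hlamm]
      exact image_card_ge _ _ hs (by omega) h3 h4 (fun a => (φ.2.2.2 a).isLt) ht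
        (smallSet_card _ _ (by omega) (by omega) h3 h4 (fun a => (φ.2.2.2 a).isLt) ht)
    rw [hPset]
    simp only [Finset.card_product]
    calc T = 2^(s-3) * 2^(s-3) := by rw [hT, ← pow_add]; congr 1; omega
      _ ≤ _ := Nat.mul_le_mul hr hc
  have hBadSetCard : ∀ φ, Valid φ → (BadSet φ).card ≤ (q-1)^T * q^(Ωc - T) := by
    intro φ hφ
    rw [hBadSet]
    simp only []
    rw [Fintype.card_piFinset]
    have hcards : ∀ p, (if p ∈ Pset φ then nz else univ).card = if p ∈ Pset φ then q - 1 else q := by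
      intro p
      by_cases h : p ∈ Pset φ <;> simp [h, hnzcard]
    rw [Finset.prod_congr rfl (fun p _ => hcards p)]
    rw [Finset.prod_ite]
    rw [Finset.prod_const, Finset.prod_const]
    have hfilter_eq : (univ.filter (fun p => p ∈ Pset φ)) = Pset φ := by
      ext p; simp
    have hfilter_not : (univ.filter (fun p => ¬ p ∈ Pset φ)).card = Ωc - (Pset φ).card := by
      rw [Finset.filter_not, hfilter_eq, Finset.card_sdiff_of_subset (Finset.subset_univ _),
        Finset.card_univ]
    rw [hfilter_eq, hfilter_not]
    exact prod_bound (hPcard φ hφ)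
      (le_trans (Finset.card_le_univ _) (le_of_eq Finset.card_univ))
  -- the union of all bad escape sets
  set Bad1 := ((univ : Finset ((Fin t → Fin N) × (Fin t → Fin N) × (Fin t → Fin N) ×
      (Fin t → Fin N))).filter Valid).biUnion BadSet with hBad1def
  have hΦcard : Fintype.card ((Fin t → Fin N) × (Fin t → Fin N) × (Fin t → Fin N) ×
      (Fin t → Fin N)) = 2^(4*t*m) := by
    simp only [Fintype.card_prod, Fintype.card_fun, Fintype.card_fin]
    rw [hN, ← pow_mul, ← pow_add, ← pow_add, ← pow_add]
    congr 1
    ring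
  have hTΩ : T ≤ Ωc := by
    rw [hT, hΩcdef, Fintype.card_prod, Fintype.card_prod, Fintype.card_fin, Fintype.card_fin]
    calc (2:ℕ)^(2*s-6) ≤ 2^(2*m) := Nat.pow_le_pow_right (by norm_num) (by omega)
      _ = N * N := by rw [hN, ← pow_add]; congr 1; omega
      _ ≤ (lam+1) * N * ((lam+1) * N) := by
          have h1 : N ≤ (lam+1) * N := by
            calc N = 1 * N := (one_mul N).symm
              _ ≤ (lam+1) * N := Nat.mul_le_mul_right N (by omega)
          exact Nat.mul_le_mul h1 h1
  have hBad1 : 4 * Bad1.card ≤ q ^ Ωc := by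
    have h1 : Bad1.card ≤ 2^(4*t*m) * ((q-1)^T * q^(Ωc - T)) := by
      calc Bad1.card ≤ ∑ φ ∈ (univ.filter Valid), (BadSet φ).card := Finset.card_biUnion_le
        _ ≤ ∑ _φ ∈ (univ.filter Valid), (q-1)^T * q^(Ωc - T) := by
            apply Finset.sum_le_sum
            intro φ hφ
            exact hBadSetCard φ (Finset.mem_filter.1 hφ).2
        _ = (univ.filter Valid).card * ((q-1)^T * q^(Ωc - T)) := by
            rw [Finset.sum_const, smul_eq_mul]
        _ ≤ 2^(4*t*m) * ((q-1)^T * q^(Ωc - T)) := by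
            apply Nat.mul_le_mul_right
            calc (univ.filter Valid).card ≤ (univ : Finset _).card := Finset.card_le_univ _
              _ = 2^(4*t*m) := by rw [Finset.card_univ, hΦcard]
    calc 4 * Bad1.card ≤ 4 * (2^(4*t*m) * ((q-1)^T * q^(Ωc - T))) := by omega
      _ ≤ 2^(4*t*m+3) * (q-1)^T * q^(Ωc - T) := by
          have : (4:ℕ) * 2^(4*t*m) ≤ 2^(4*t*m+3) := by
            rw [pow_add]
            have h8 : (2:ℕ)^3 = 8 := rfl
            rw [h8]
            omega
          calc 4 * (2^(4*t*m) * ((q-1)^T * q^(Ωc - T)))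
              = (4 * 2^(4*t*m)) * (q-1)^T * q^(Ωc - T) := by ring
            _ ≤ 2^(4*t*m+3) * (q-1)^T * q^(Ωc - T) := by
                apply Nat.mul_le_mul_right
                exact Nat.mul_le_mul_right _ this
      _ ≤ q^T * q^(Ωc - T) := by
          apply Nat.mul_le_mul_right
          exact key_pow_ineq q (4*t*m+3) T hq hmain
      _ = q^Ωc := by rw [← pow_add]; congr 1; omega
  -- a good choice function exists
  have hqΩ4 : 4 ≤ q ^ Ωc := by
    calc (4:ℕ) = 2^2 := rfl
      _ ≤ q^2 := Nat.pow_le_pow_left hq 2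
      _ ≤ q^Ωc := Nat.pow_le_pow_right (by omega) hΩc
  obtain ⟨F, hF⟩ : ∃ F : (Fin (lam+1) × Fin N) × (Fin (lam+1) × Fin N) → Fin q,
      F ∉ Bad1 ∪ Bad2 := by
    by_contra hcon
    push_neg at hcon
    have hsub : (univ : Finset ((Fin (lam+1) × Fin N) × (Fin (lam+1) × Fin N) → Fin q))
        ⊆ Bad1 ∪ Bad2 := fun F _ => hcon F
    have hcard := Finset.card_le_card hsub
    rw [Finset.card_univ, Fintype.card_fun, Fintype.card_fin, ← hΩcdef] at hcard
    have hub := Finset.card_union_le Bad1 Bad2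
    omega
  have hF1 : F ∉ Bad1 := fun h => hF (Finset.mem_union_left _ h)
  have hF2 : F ∉ Bad2 := fun h => hF (Finset.mem_union_right _ h)
  -- build the zero set
  refine ⟨(univ.filter (fun p => F p = 0)).biUnion
    (fun p => (wSet N ((p.1.1:ℕ), (p.1.2:ℕ))) ×ˢ (wSet N ((p.2.1:ℕ), (p.2.2:ℕ)))), ?_, ?_⟩
  · -- cardinality bound
    have hZarea : ((univ.filter (fun p => F p = 0)).biUnion
        (fun p => (wSet N ((p.1.1:ℕ), (p.1.2:ℕ))) ×ˢ (wSet N ((p.2.1:ℕ), (p.2.2:ℕ))))).card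
        ≤ area F := by
      calc _ ≤ ∑ p ∈ univ.filter (fun p => F p = 0),
            ((wSet N ((p.1.1:ℕ), (p.1.2:ℕ))) ×ˢ (wSet N ((p.2.1:ℕ), (p.2.2:ℕ)))).card :=
            Finset.card_biUnion_le
        _ = area F := by
            rw [harea]
            apply Finset.sum_congr rfl
            intro p _
            rw [Finset.card_product]
    have hsmallarea : q * area F < 8 * N^2 * (lam+1)^2 := by
      by_contra hcon
      push_neg at hcon
      exact hF2 (Finset.mem_filter.2 ⟨mem_univ F, by omega⟩)
    have hmul := Nat.mul_le_mul_left q hZarea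
    rw [hlam1] at hsmallarea
    omega
  · -- the catching property
    intro lo hi lo' hi' h1 h2 h3 h4
    set φ : (Fin t → Fin N) × (Fin t → Fin N) × (Fin t → Fin N) × (Fin t → Fin N) :=
      (lo, hi, lo', hi') with hφdef
    have hφvalid : Valid φ := ⟨h1, h2, h3, h4⟩
    have hnotmem : F ∉ BadSet φ := by
      intro hmem
      exact hF1 (Finset.mem_biUnion.2 ⟨φ, Finset.mem_filter.2 ⟨mem_univ φ, hφvalid⟩, hmem⟩)
    have hexp : ∃ p, p ∈ Pset φ ∧ F p = 0 := by
      rw [hBadSet] at hnotmem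
      simp only [Fintype.mem_piFinset] at hnotmem
      push_neg at hnotmem
      obtain ⟨p, hp⟩ := hnotmem
      by_cases hpP : p ∈ Pset φ
      · rw [if_pos hpP] at hp
        refine ⟨p, hpP, ?_⟩
        by_contra hne
        exact hp (by rw [hnz]; exact Finset.mem_filter.2 ⟨mem_univ _, hne⟩)
      · rw [if_neg hpP] at hp
        exact absurd (mem_univ _) hp
    obtain ⟨p, hpP, hpF⟩ := hexp
    rw [hPset] at hpP
    simp only [Finset.mem_product] at hpP
    obtain ⟨hp1, hp2⟩ := hpP
    rw [Finset.mem_image] at hp1 hp2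
    obtain ⟨a, haS, haeq⟩ := hp1
    obtain ⟨b, hbS, hbeq⟩ := hp2
    refine ⟨a, b, ?_⟩
    intro i j hi1 hi2 hj1 hj2
    apply Finset.mem_biUnion.2
    refine ⟨p, Finset.mem_filter.2 ⟨mem_univ p, hpF⟩, ?_⟩
    rw [Finset.mem_product]
    constructor
    · have := axisMap_window (fun a => ((φ.1 a : ℕ))) (fun a => ((φ.2.1 a : ℕ)))
        haS (φ.2.1 a).isLt (h1 a) i hi1 hi2
      rw [haeq] at this
      exact this
    · have := axisMap_window (fun a => ((φ.2.2.1 a : ℕ))) (fun a => ((φ.2.2.2 a : ℕ)))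
        hbS (φ.2.2.2 b).isLt (h3 b) j hj1 hj2
      rw [hbeq] at this
      exact this


/-- The shuffle involution on `Fin k` (transposing a `t × t` grid, fixing the rest). -/
def shuffleFun (k t : ℕ) (hk : t*t ≤ k) : Fin k → Fin k := fun i =>
  if h : (i:ℕ) < t*t then
    ⟨t * ((i:ℕ) % t) + (i:ℕ)/t, by
      have ht0 : 0 < t := by
        rcases Nat.eq_zero_or_pos t with h0 | h0
        · subst h0; simp at h
        · exact h0
      have h1 : (i:ℕ) % t < t := Nat.mod_lt _ ht0
      have h2 : (i:ℕ) / t < t := by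
        rw [Nat.div_lt_iff_lt_mul ht0]; exact lt_of_lt_of_le h (by nlinarith)
      calc t * ((i:ℕ) % t) + (i:ℕ)/t < t * ((i:ℕ) % t) + t := by omega
        _ = t * ((i:ℕ) % t + 1) := by ring
        _ ≤ t * t := Nat.mul_le_mul_left _ (by omega)
        _ ≤ k := hk⟩
  else i

lemma shuffleFun_val_lt {k t : ℕ} (hk : t*t ≤ k) (i : Fin k) (h : (i:ℕ) < t*t) :
    ((shuffleFun k t hk i : Fin k) : ℕ) = t * ((i:ℕ) % t) + (i:ℕ)/t := by
  rw [shuffleFun, dif_pos h]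

lemma shuffleFun_val_ge {k t : ℕ} (hk : t*t ≤ k) (i : Fin k) (h : ¬ ((i:ℕ) < t*t)) :
    shuffleFun k t hk i = i := by
  rw [shuffleFun, dif_neg h]

lemma shuffleFun_invol (k t : ℕ) (hk : t*t ≤ k) : Function.Involutive (shuffleFun k t hk) := by
  intro i
  by_cases h : (i:ℕ) < t*t
  · have ht0 : 0 < t := by
      rcases Nat.eq_zero_or_pos t with h0 | h0
      · subst h0; simp at h
      · exact h0
    have h1 : (i:ℕ) % t < t := Nat.mod_lt _ ht0
    have h2 : (i:ℕ) / t < t := by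
      rw [Nat.div_lt_iff_lt_mul ht0]; exact lt_of_lt_of_le h (by nlinarith)
    have hval : (t * ((i:ℕ) % t) + (i:ℕ)/t) < t*t := by
      calc t * ((i:ℕ) % t) + (i:ℕ)/t < t * ((i:ℕ) % t) + t := by omega
        _ = t * ((i:ℕ) % t + 1) := by ring
        _ ≤ t * t := Nat.mul_le_mul_left _ (by omega)
    have hj : ((shuffleFun k t hk i : Fin k) : ℕ) = t * ((i:ℕ) % t) + (i:ℕ)/t :=
      shuffleFun_val_lt hk i h
    have hjlt : ((shuffleFun k t hk i : Fin k) : ℕ) < t*t := by rw [hj]; exact hval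
    apply Fin.ext
    rw [shuffleFun_val_lt hk _ hjlt, hj]
    have hmod : (t * ((i:ℕ) % t) + (i:ℕ)/t) % t = (i:ℕ)/t := by
      rw [Nat.mul_add_mod]
      exact Nat.mod_eq_of_lt h2
    have hdiv : (t * ((i:ℕ) % t) + (i:ℕ)/t) / t = (i:ℕ) % t := by
      rw [Nat.mul_add_div ht0]
      rw [Nat.div_eq_of_lt h2]
      omega
    rw [hmod, hdiv]
    exact Nat.div_add_mod _ _
  · rw [shuffleFun_val_ge hk i h, shuffleFun_val_ge hk i h]

/-- The shuffle permutation. -/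
def shufflePerm (k t : ℕ) (hk : t*t ≤ k) : Equiv.Perm (Fin k) :=
  (shuffleFun_invol k t hk).toPerm

lemma shufflePerm_apply (k t : ℕ) (hk : t*t ≤ k) (i : Fin k) :
    shufflePerm k t hk i = shuffleFun k t hk i := rfl

/-- Index of cell `(a,b)` of the `t × t` grid inside `Fin k`. -/
def gridIdx {t k : ℕ} (hk : t*t ≤ k) (a b : Fin t) : Fin k :=
  ⟨(a:ℕ)*t + b, by
    have ha := a.isLt
    have hb := b.isLt
    have h1 : (a:ℕ)*t + (b:ℕ) < ((a:ℕ)+1)*t := by rw [add_mul]; omega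
    have h2 : ((a:ℕ)+1)*t ≤ t*t := Nat.mul_le_mul_right t ha
    omega⟩

lemma shufflePerm_grid {t k : ℕ} (hk : t*t ≤ k) (a b : Fin t) :
    shufflePerm k t hk (gridIdx hk a b) = gridIdx hk b a := by
  have ht0 : 0 < t := lt_of_le_of_lt (Nat.zero_le _) a.isLt
  have hlt : ((gridIdx hk a b : Fin k) : ℕ) < t*t := by
    show (a:ℕ)*t + b < t*t
    have ha := a.isLt
    have hb := b.isLt
    calc (a:ℕ)*t + (b:ℕ) < ((a:ℕ)+1)*t := by rw [add_mul]; omega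
      _ ≤ t*t := Nat.mul_le_mul_right t ha
  rw [shufflePerm_apply, shuffleFun, dif_pos hlt]
  apply Fin.ext
  show t * (((a:ℕ)*t + b) % t) + ((a:ℕ)*t + b)/t = (b:ℕ)*t + a
  have hmod : ((a:ℕ)*t + b) % t = (b:ℕ) := by
    rw [mul_comm (a:ℕ) t, Nat.mul_add_mod]
    exact Nat.mod_eq_of_lt b.isLt
  have hdiv : ((a:ℕ)*t + b)/t = (a:ℕ) := by
    rw [mul_comm (a:ℕ) t, Nat.mul_add_div ht0, Nat.div_eq_of_lt b.isLt]
    omega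
  rw [hmod, hdiv]
  ring

/-- Mass of the complement-of-`Z` matrix. -/
lemma mass_compl (N : ℕ) (Z : Finset (ℕ × ℕ)) :
    N*N - Z.card ≤ mass (fun i j : Fin N => decide (((i:ℕ), (j:ℕ)) ∉ Z)) := by
  classical
  set M : Fin N → Fin N → Bool := fun i j => decide (((i:ℕ), (j:ℕ)) ∉ Z) with hM
  have hsplit : (univ.filter fun p : Fin N × Fin N => M p.1 p.2 = true).card
      + (univ.filter fun p : Fin N × Fin N => ¬ (M p.1 p.2 = true)).card
      = Fintype.card (Fin N × Fin N) := by
    rw [← Finset.card_univ]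
    exact Finset.card_filter_add_card_filter_not _
  have hcardU : Fintype.card (Fin N × Fin N) = N*N := by
    rw [Fintype.card_prod, Fintype.card_fin]
  have hbad : (univ.filter fun p : Fin N × Fin N => ¬ (M p.1 p.2 = true)).card ≤ Z.card := by
    apply Finset.card_le_card_of_injOn (fun p => ((p.1:ℕ), (p.2:ℕ)))
    · intro p hp
      have := (Finset.mem_filter.1 hp).2
      rw [hM] at this
      simp only [decide_eq_true_eq] at this
      exact not_not.1 this
    · intro p _ p' _ hpp
      have h1 : (p.1 : ℕ) = (p'.1 : ℕ) := congrArg Prod.fst hpp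
      have h2 : (p.2 : ℕ) = (p'.2 : ℕ) := congrArg Prod.snd hpp
      exact Prod.ext (Fin.ext h1) (Fin.ext h2)
  rw [mass]
  omega


lemma avoids_of_catch (m s k : ℕ) (hs : 1 ≤ s) (hk : 2^s * 2^s ≤ k) (Z : Finset (ℕ × ℕ))
    (hcatch : ∀ lo hi lo' hi' : Fin (2^s) → Fin (2^m),
        (∀ a, (lo a : ℕ) ≤ (hi a : ℕ)) →
        (∀ a b, a < b → (hi a : ℕ) < (lo b : ℕ)) →
        (∀ a, (lo' a : ℕ) ≤ (hi' a : ℕ)) →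
        (∀ a b, a < b → (hi' a : ℕ) < (lo' b : ℕ)) →
        ∃ a b : Fin (2^s), ∀ i j : ℕ,
          (lo a : ℕ) ≤ i → i ≤ (hi a : ℕ) → (lo' b : ℕ) ≤ j → j ≤ (hi' b : ℕ) → (i, j) ∈ Z) :
    AvoidsPerm (fun i j : Fin (2^m) => decide (((i:ℕ), (j:ℕ)) ∉ Z)) (shufflePerm k (2^s) hk) := by
  intro hcon
  obtain ⟨r, c, hr, hc, hone⟩ := hcon
  have ht0 : 0 < 2^s := Nat.pow_pos (by norm_num)
  set t := 2^s with htdef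
  set z : Fin t := ⟨0, ht0⟩ with hz
  set e : Fin t := ⟨t-1, by omega⟩ with he
  have hmono_r : Monotone r := hr.monotone
  have hmono_c : Monotone c := hc.monotone
  have hgmono : ∀ (a : Fin t) (b b' : Fin t), b ≤ b' → gridIdx hk a b ≤ gridIdx hk a b' := by
    intro a b b' hbb
    show ((a:ℕ)*t + b) ≤ ((a:ℕ)*t + b')
    have : (b:ℕ) ≤ (b':ℕ) := hbb
    omega
  have hgsep : ∀ (a a' : Fin t), a < a' → gridIdx hk a e < gridIdx hk a' z := by
    intro a a' haa
    show ((a:ℕ)*t + (e:ℕ)) < ((a':ℕ)*t + (z:ℕ))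
    have h1 : (a:ℕ) + 1 ≤ (a':ℕ) := haa
    have h2 : ((a:ℕ)+1)*t ≤ (a':ℕ)*t := Nat.mul_le_mul_right t h1
    have h3 : (e:ℕ) = t - 1 := rfl
    have h4 : (z:ℕ) = 0 := rfl
    rw [add_mul] at h2
    omega
  obtain ⟨a, b, hab⟩ := hcatch
    (fun a => r (gridIdx hk a z)) (fun a => r (gridIdx hk a e))
    (fun b => c (gridIdx hk b z)) (fun b => c (gridIdx hk b e))
    (fun a => hmono_r (hgmono a z e (by show (z:ℕ) ≤ (e:ℕ); show 0 ≤ t-1; omega)))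
    (fun a a' h => hr (hgsep a a' h))
    (fun b => hmono_c (hgmono b z e (by show (z:ℕ) ≤ (e:ℕ); show 0 ≤ t-1; omega)))
    (fun b b' h => hc (hgsep b b' h))
  have hone' := hone (gridIdx hk a b) (shufflePerm k t hk (gridIdx hk a b))
    (by simp [permMatrix]; rfl)
  rw [shufflePerm_grid] at hone'
  simp only [decide_eq_true_eq] at hone'
  apply hone'
  apply hab
  · exact hmono_r (hgmono a z b (by show (0:ℕ) ≤ (b:ℕ); omega))
  · exact hmono_r (hgmono a b e (by show (b:ℕ) ≤ t-1; have := b.isLt; omega))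
  · exact hmono_c (hgmono b z a (by show (0:ℕ) ≤ (a:ℕ); omega))
  · exact hmono_c (hgmono b a e (by show (a:ℕ) ≤ t-1; have := a.isLt; omega))

/-- Any matrix with fewer than `k` rows avoids every `k`-permutation. -/
lemma avoids_small {k N : ℕ} (h : N < k) (M : Fin N → Fin N → Bool)
    (π : Equiv.Perm (Fin k)) : AvoidsPerm M π := by
  intro hcon
  obtain ⟨r, _, hr, _, _⟩ := hcon
  have := Fintype.card_le_of_injective r hr.injective
  simp only [Fintype.card_fin] at this
  omega

/-- The `2 × 2` anti-diagonal matrix avoids the identity `2`-permutation. -/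
lemma avoids_two :
    AvoidsPerm (fun i j : Fin 2 => decide (i ≠ j)) (Equiv.refl (Fin 2)) := by
  intro hcon
  obtain ⟨r, c, hr, hc, hone⟩ := hcon
  have h0 : (0 : Fin 2) < 1 := by decide
  have hr01 := hr h0
  have hc01 := hc h0
  have hr0 : (r 0 : ℕ) = 0 := by
    have h1 : (r 0 : ℕ) < (r 1 : ℕ) := hr01
    have := (r 1).isLt
    omega
  have hc0 : (c 0 : ℕ) = 0 := by
    have h1 : (c 0 : ℕ) < (c 1 : ℕ) := hc01
    have := (c 1).isLt
    omega
  have := hone 0 0 (by simp [permMatrix])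
  simp only [decide_eq_true_eq] at this
  exact this (Fin.ext (by omega))

lemma mass_two : mass (fun i j : Fin 2 => decide (i ≠ j)) = 2 := by decide

lemma mass_allones (N : ℕ) : mass (fun _ _ : Fin N => true) = N * N := by
  rw [mass]
  have : (univ.filter fun p : Fin N × Fin N => (true : Bool) = true) = univ := by
    simp
  rw [this, Finset.card_univ, Fintype.card_prod, Fintype.card_fin]


/-- Case A: the trivial construction when `2^(c k^(1/12)) ≤ max 2 (k-1)`. -/
lemma caseA (k : ℕ) (hk2 : 2 ≤ k)
    (hA : (2:ℝ) ^ ((1:ℝ)/1024 * (k:ℝ) ^ ((1:ℝ)/12)) ≤ ((max 2 (k-1) : ℕ) : ℝ)) :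
    ∃ (π : Equiv.Perm (Fin k)) (N : ℕ), 0 < N ∧
      (2:ℝ) ^ ((1:ℝ)/1024 * (k:ℝ) ^ ((1:ℝ)/12)) ≤ (N:ℝ) ∧
      ∃ M : Fin N → Fin N → Bool,
        (1 - (k:ℝ) ^ (-(1:ℝ)/4)) * (N:ℝ)^2 ≤ (mass M : ℝ) ∧ AvoidsPerm M π := by
  rcases eq_or_lt_of_le hk2 with hk2' | hk3
  · -- k = 2
    subst hk2'
    have hmax : (max 2 (2-1) : ℕ) = 2 := rfl
    rw [hmax] at hA
    refine ⟨Equiv.refl (Fin 2), 2, by norm_num, by exact_mod_cast hA,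
      (fun i j : Fin 2 => decide (i ≠ j)), ?_, avoids_two⟩
    rw [mass_two]
    have h1 : (2:ℝ) ^ ((1:ℝ)/4) ≤ 2 := by
      calc (2:ℝ) ^ ((1:ℝ)/4) ≤ (2:ℝ) ^ (1:ℝ) := by
            apply Real.rpow_le_rpow_of_exponent_le (by norm_num) (by norm_num)
        _ = 2 := Real.rpow_one 2
    have h2 : ((2:ℕ):ℝ) ^ (-(1:ℝ)/4) = ((2:ℝ) ^ ((1:ℝ)/4))⁻¹ := by
      push_cast
      rw [show (-(1:ℝ)/4) = -((1:ℝ)/4) by norm_num, Real.rpow_neg (by norm_num)]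
    have h3 : (1:ℝ)/2 ≤ ((2:ℕ):ℝ) ^ (-(1:ℝ)/4) := by
      rw [h2]
      have hpos : (0:ℝ) < (2:ℝ) ^ ((1:ℝ)/4) := Real.rpow_pos_of_pos (by norm_num) _
      rw [le_inv_comm₀ (by norm_num) hpos]
      simpa using h1
    push_cast
    nlinarith
  · -- k ≥ 3
    have hk3' : 3 ≤ k := hk3
    have hmax : (max 2 (k-1) : ℕ) = k - 1 := by omega
    rw [hmax] at hA
    refine ⟨Equiv.refl (Fin k), k - 1, by omega, hA,
      (fun _ _ : Fin (k-1) => true), ?_, avoids_small (by omega) _ _⟩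
    rw [mass_allones]
    have hx : (0:ℝ) ≤ (k:ℝ) ^ (-(1:ℝ)/4) := Real.rpow_nonneg (by positivity) _
    have h1 : (1 - (k:ℝ) ^ (-(1:ℝ)/4)) ≤ 1 := by linarith
    have h2 : (0:ℝ) ≤ ((k-1 : ℕ):ℝ)^2 := by positivity
    calc (1 - (k:ℝ) ^ (-(1:ℝ)/4)) * ((k-1:ℕ):ℝ)^2 ≤ 1 * ((k-1:ℕ):ℝ)^2 := by nlinarith
      _ = ((k-1:ℕ):ℝ)^2 := one_mul _
      _ = (((k-1) * (k-1) : ℕ) : ℝ) := by push_cast; ring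

/-- Case B: the probabilistic construction when `max 2 (k-1) < 2^(c k^(1/12))`. -/
lemma caseB (k : ℕ) (hk2 : 2 ≤ k)
    (hA : ((max 2 (k-1) : ℕ) : ℝ) < (2:ℝ) ^ ((1:ℝ)/1024 * (k:ℝ) ^ ((1:ℝ)/12))) :
    ∃ (π : Equiv.Perm (Fin k)) (N : ℕ), 0 < N ∧
      (2:ℝ) ^ ((1:ℝ)/1024 * (k:ℝ) ^ ((1:ℝ)/12)) ≤ (N:ℝ) ∧
      ∃ M : Fin N → Fin N → Bool,
        (1 - (k:ℝ) ^ (-(1:ℝ)/4)) * (N:ℝ)^2 ≤ (mass M : ℝ) ∧ AvoidsPerm M π := by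
  have hk0 : (0:ℝ) < (k:ℝ) := by positivity
  set κ : ℝ := (k:ℝ) ^ ((1:ℝ)/12) with hκdef
  have hκ0 : (0:ℝ) ≤ κ := Real.rpow_nonneg (le_of_lt hk0) _
  have hκ12 : κ ^ (12:ℕ) = (k:ℝ) := by
    rw [hκdef, ← Real.rpow_natCast ((k:ℝ) ^ ((1:ℝ)/12)) 12, ← Real.rpow_mul (le_of_lt hk0)]
    norm_num
  set ν := ⌊κ⌋₊ with hνdef
  have hν_le : (ν:ℝ) ≤ κ := Nat.floor_le hκ0
  have hν_lt : κ < (ν:ℝ) + 1 := Nat.lt_floor_add_one κ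
  -- F1 : ν^12 ≤ k
  have F1 : ν^12 ≤ k := by
    have h : ((ν^12 : ℕ):ℝ) ≤ (k:ℝ) := by
      push_cast
      calc (ν:ℝ)^12 ≤ κ^12 := by
            apply pow_le_pow_left₀ (by positivity) hν_le
        _ = (k:ℝ) := hκ12
    exact_mod_cast h
  -- 2 < 2^(κ/1024), hence 1024 < κ
  have h2max : (2:ℝ) ≤ ((max 2 (k-1) : ℕ) : ℝ) := by exact_mod_cast le_max_left 2 (k-1)
  have hgt : (1:ℝ) < (1:ℝ)/1024 * κ := by
    have h1 : (2:ℝ) ^ (1:ℝ) < (2:ℝ) ^ ((1:ℝ)/1024 * κ) := by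
      rw [Real.rpow_one]
      exact lt_of_le_of_lt h2max hA
    exact (Real.rpow_lt_rpow_left_iff (by norm_num)).1 h1
  have hκ1024 : (1024:ℝ) < κ := by linarith
  -- F2 : 1024 ≤ ν
  have F2 : 1024 ≤ ν := by
    rw [hνdef]
    exact Nat.le_floor (by exact_mod_cast le_of_lt hκ1024)
  -- k ≥ 2^120
  have hk120 : 2^120 ≤ k := by
    calc (2:ℕ)^120 = (2^10)^12 := by norm_num
      _ = 1024^12 := by norm_num
      _ ≤ ν^12 := Nat.pow_le_pow_left F2 12
      _ ≤ k := F1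
  set L := Nat.log 2 k with hLdef
  have F5 : 120 ≤ L := by
    rw [hLdef]
    exact (Nat.le_log_iff_pow_le (by norm_num) (by omega)).2 hk120
  have hkL : 2^L ≤ k := Nat.pow_log_le_self 2 (by omega)
  have hkL1 : k < 2^(L+1) := Nat.lt_pow_succ_log_self (by norm_num) k
  -- rewrite the max
  have hmax : (max 2 (k-1) : ℕ) = k - 1 := by omega
  rw [hmax] at hA
  -- cκ ≤ c(ν+1)
  have hcmono : (1:ℝ)/1024 * κ ≤ (1:ℝ)/1024 * ((ν:ℝ)+1) := by linarith
  have hA2 : ((k-1 : ℕ):ℝ) < (2:ℝ) ^ ((1:ℝ)/1024 * ((ν:ℝ)+1)) := by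
    calc ((k-1 : ℕ):ℝ) < (2:ℝ) ^ ((1:ℝ)/1024 * κ) := hA
      _ ≤ (2:ℝ) ^ ((1:ℝ)/1024 * ((ν:ℝ)+1)) :=
        Real.rpow_le_rpow_of_exponent_le (by norm_num) hcmono
  -- F3 : 1024*(L-1) ≤ ν
  have F3 : 1024*(L-1) ≤ ν := by
    have hnat : 2^(L-1) ≤ k - 1 := by
      have h1 : 2^L ≤ k := hkL
      have h2 : (2:ℕ)^L = 2^(L-1) * 2 := by
        rw [← pow_succ]
        congr 1
        omega
      have h3 : 1 ≤ (2:ℕ)^(L-1) := Nat.one_le_two_pow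
      omega
    have hr : (2:ℝ) ^ (((L-1 : ℕ)):ℝ) ≤ ((k-1:ℕ):ℝ) := by
      rw [Real.rpow_natCast]
      exact_mod_cast hnat
    have h4 : (2:ℝ) ^ (((L-1:ℕ)):ℝ) < (2:ℝ) ^ ((1:ℝ)/1024 * ((ν:ℝ)+1)) :=
      lt_of_le_of_lt hr hA2
    have h5 : ((L-1:ℕ):ℝ) < (1:ℝ)/1024 * ((ν:ℝ)+1) :=
      (Real.rpow_lt_rpow_left_iff (by norm_num)).1 h4
    have h6 : (1024:ℝ) * ((L-1:ℕ):ℝ) < (ν:ℝ)+1 := by linarith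
    have h7 : (1024 * (L-1) : ℕ) < ν + 1 := by exact_mod_cast h6
    omega
  -- F4 : ν < 2^E
  set E := (L+1)/12 + 1 with hEdef
  have F4 : ν < 2^E := by
    by_contra hcon
    push_neg at hcon
    have h1 : (2^E)^12 ≤ ν^12 := Nat.pow_le_pow_left hcon 12
    have h2 : ((2:ℕ)^E)^12 = 2^(E*12) := by rw [← pow_mul]
    have h3 : L + 1 ≤ E * 12 := by omega
    have h4 : (2:ℕ)^(L+1) ≤ 2^(E*12) := Nat.pow_le_pow_right (by norm_num) h3
    omega
  -- parameters
  set s := L/2 - 1 with hsdef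
  set lam := ν/512 with hlamdef
  set m := s + lam - 1 with hmdef
  set q := 2^s/(2048*lam) with hqdef
  have hs3 : 3 ≤ s := by omega
  have hslam : s + 1 ≤ lam := by omega
  have hsm : s ≤ m := by omega
  have hm2lam : m ≤ 2*lam := by omega
  have hlam1 : 1 ≤ lam := by omega
  have hνm : ν + 1 ≤ 1024*m := by omega
  have hmlam1 : m + 2 - s = lam + 1 := by omega
  -- ν^6 ≤ 2^(s+8)
  have hν6 : ν^6 ≤ 2^(s+8) := by
    calc ν^6 ≤ (2^E)^6 := Nat.pow_le_pow_left (le_of_lt F4) 6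
      _ = 2^(E*6) := by rw [← pow_mul]
      _ ≤ 2^(s+8) := Nat.pow_le_pow_right (by norm_num) (by omega)
  -- KEY1
  have KEY1 : 2^14 * (lam * ((lam+1)^2 * (ν+1)^3)) ≤ 2^s := by
    have h1 : lam + 1 ≤ 2*lam := by omega
    have h2 : ν + 1 ≤ 2*ν := by omega
    have h3 : 512*lam ≤ ν := by omega
    have hcube : 2^27 * lam^3 ≤ ν^3 := by
      have := Nat.pow_le_pow_left h3 3
      calc 2^27 * lam^3 = (512*lam)^3 := by ring
        _ ≤ ν^3 := this
    have hstep : 2^8 * (2^14 * (lam * ((lam+1)^2 * (ν+1)^3))) ≤ ν^6 := by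
      calc 2^8 * (2^14 * (lam * ((lam+1)^2 * (ν+1)^3)))
          ≤ 2^8 * (2^14 * (lam * ((2*lam)^2 * (2*ν)^3))) := by
            apply Nat.mul_le_mul_left
            apply Nat.mul_le_mul_left
            apply Nat.mul_le_mul_left
            exact Nat.mul_le_mul (Nat.pow_le_pow_left h1 2) (Nat.pow_le_pow_left h2 3)
        _ = (2^27 * lam^3) * ν^3 := by ring
        _ ≤ ν^3 * ν^3 := Nat.mul_le_mul_right _ hcube
        _ = ν^6 := by ring
    have hfin : 2^8 * (2^14 * (lam * ((lam+1)^2 * (ν+1)^3))) ≤ 2^8 * 2^s := by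
      calc 2^8 * (2^14 * (lam * ((lam+1)^2 * (ν+1)^3))) ≤ ν^6 := hstep
        _ ≤ 2^(s+8) := hν6
        _ = 2^8 * 2^s := by rw [pow_add]; ring
    exact Nat.le_of_mul_le_mul_left hfin (by positivity)
  -- KEY3
  have KEY3 : 8*(lam+1)^2*(ν+1)^3 ≤ q := by
    rw [hqdef, Nat.le_div_iff_mul_le (by positivity)]
    calc 8*(lam+1)^2*(ν+1)^3 * (2048*lam) = 2^14 * (lam * ((lam+1)^2 * (ν+1)^3)) := by ring
      _ ≤ 2^s := KEY1
  have hq2 : 2 ≤ q := by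
    have h8 : (8:ℕ) ≤ 8*(lam+1)^2*(ν+1)^3 := by
      have e1 : (1:ℕ) ≤ (lam+1)^2 := Nat.one_le_pow _ _ (by omega)
      have e2 : (1:ℕ) ≤ (ν+1)^3 := Nat.one_le_pow _ _ (by omega)
      calc (8:ℕ) = 8*1*1 := by norm_num
        _ ≤ 8*(lam+1)^2*(ν+1)^3 := by
          apply Nat.mul_le_mul
          · exact Nat.mul_le_mul_left 8 e1
          · exact e2
    omega
  -- KEY2 : hmain for core
  have KEY2 : q * (4 * 2^s * m + 3) ≤ 2^(2*s-6) := by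
    have hqt : q * (2048 * lam) ≤ 2^s := by
      rw [hqdef]
      exact Nat.div_mul_le_self _ _
    have h4m : 4*m + 3 ≤ 32*lam := by omega
    have hq32 : q*(32*lam) ≤ 2^(s-6) := by
      have h64 : (q*(32*lam)) * 64 ≤ 2^(s-6) * 64 := by
        calc (q*(32*lam)) * 64 = q * (2048*lam) := by ring
          _ ≤ 2^s := hqt
          _ = 2^(s-6) * 64 := by
              rw [show s = (s-6)+6 by omega, pow_add]
              norm_num
      exact Nat.le_of_mul_le_mul_right h64 (by norm_num)
    have ht1 : 1 ≤ 2^s := Nat.one_le_two_pow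
    calc q * (4 * 2^s * m + 3) ≤ q * (2^s * (4*m+3)) := by
          apply Nat.mul_le_mul_left
          have hexp : 2^s * (4*m+3) = 4 * 2^s * m + 3 * 2^s := by ring
          omega
      _ = 2^s * (q * (4*m+3)) := by ring
      _ ≤ 2^s * (q * (32*lam)) := by
          apply Nat.mul_le_mul_left
          exact Nat.mul_le_mul_left q h4m
      _ ≤ 2^s * 2^(s-6) := Nat.mul_le_mul_left _ hq32
      _ = 2^(2*s-6) := by rw [← pow_add]; congr 1; omega
  have hk_tt : 2^s * 2^s ≤ k := by
    calc (2:ℕ)^s * 2^s = 2^(2*s) := by rw [← pow_add]; congr 1; omega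
      _ ≤ 2^L := Nat.pow_le_pow_right (by norm_num) (by omega)
      _ ≤ k := hkL
  -- invoke the core construction
  obtain ⟨Z, hZcard, hcatch⟩ := core m s q hs3 hsm hq2 KEY2
  rw [hmlam1] at hZcard
  refine ⟨shufflePerm k (2^s) hk_tt, 2^m, by positivity, ?_, ?_⟩
  · -- size bound
    have h1 : (1:ℝ)/1024 * κ ≤ (m:ℝ) := by
      have h2 : ((ν:ℝ)+1) ≤ 1024*(m:ℝ) := by exact_mod_cast hνm
      linarith
    calc (2:ℝ) ^ ((1:ℝ)/1024 * κ) ≤ (2:ℝ) ^ ((m:ℝ)) :=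
          Real.rpow_le_rpow_of_exponent_le (by norm_num) h1
      _ = ((2^m : ℕ) : ℝ) := by
          rw [Real.rpow_natCast]
          push_cast
          ring
  · refine ⟨fun i j : Fin (2^m) => decide (((i:ℕ), (j:ℕ)) ∉ Z), ?_,
      avoids_of_catch m s k (by omega) hk_tt Z hcatch⟩
    -- mass bound
    have hZN : Z.card * (ν+1)^3 ≤ (2^m)^2 := by
      have h1 : (8*(lam+1)^2) * (Z.card*(ν+1)^3) ≤ (8*(lam+1)^2) * (2^m)^2 := by
        calc (8*(lam+1)^2) * (Z.card*(ν+1)^3) = Z.card * (8*(lam+1)^2*(ν+1)^3) := by ring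
          _ ≤ Z.card * q := Nat.mul_le_mul_left _ KEY3
          _ = q * Z.card := by ring
          _ ≤ 8 * (2^m)^2 * (lam+1)^2 := hZcard
          _ = (8*(lam+1)^2) * (2^m)^2 := by ring
      exact Nat.le_of_mul_le_mul_left h1 (by positivity)
    have hν31 : 1 ≤ (ν+1)^3 := Nat.one_le_pow _ _ (by omega)
    have hZleN : Z.card ≤ (2^m)^2 := by
      calc Z.card = Z.card * 1 := by ring
        _ ≤ Z.card * (ν+1)^3 := Nat.mul_le_mul_left _ hν31
        _ ≤ (2^m)^2 := hZN
    have hmass := mass_compl (2^m) Z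
    -- real arithmetic
    have hk14 : (k:ℝ) ^ ((1:ℝ)/4) ≤ ((ν:ℝ)+1)^3 := by
      have h1 : (k:ℝ) ^ ((1:ℝ)/4) = κ^(3:ℕ) := by
        rw [hκdef, ← Real.rpow_natCast ((k:ℝ) ^ ((1:ℝ)/12)) 3, ← Real.rpow_mul (le_of_lt hk0)]
        norm_num
      rw [h1]
      apply pow_le_pow_left₀ hκ0 (le_of_lt hν_lt)
    have hZr : (Z.card : ℝ) * (k:ℝ) ^ ((1:ℝ)/4) ≤ ((2^m : ℕ):ℝ)^2 := by
      have h2 : (Z.card:ℝ) * ((ν:ℝ)+1)^3 ≤ ((2^m : ℕ):ℝ)^2 := by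
        exact_mod_cast hZN
      calc (Z.card : ℝ) * (k:ℝ) ^ ((1:ℝ)/4) ≤ (Z.card:ℝ) * ((ν:ℝ)+1)^3 := by
            apply mul_le_mul_of_nonneg_left hk14 (by positivity)
        _ ≤ ((2^m : ℕ):ℝ)^2 := h2
    have hk14pos : (0:ℝ) < (k:ℝ) ^ ((1:ℝ)/4) := Real.rpow_pos_of_pos hk0 _
    have hZr2 : (Z.card : ℝ) ≤ (k:ℝ) ^ (-(1:ℝ)/4) * ((2^m:ℕ):ℝ)^2 := by
      have hneg : (k:ℝ) ^ (-(1:ℝ)/4) = ((k:ℝ) ^ ((1:ℝ)/4))⁻¹ := by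
        rw [show (-(1:ℝ)/4) = -((1:ℝ)/4) by norm_num, Real.rpow_neg (le_of_lt hk0)]
      rw [hneg, ← div_eq_inv_mul, le_div_iff₀ hk14pos]
      linarith [hZr]
    have hcast : (((2^m) * (2^m) - Z.card : ℕ) : ℝ) = ((2^m:ℕ):ℝ)^2 - (Z.card:ℝ) := by
      have h3 : Z.card ≤ (2^m) * (2^m) := by
        calc Z.card ≤ (2^m)^2 := hZleN
          _ = (2^m) * (2^m) := by ring
      rw [Nat.cast_sub h3]
      push_cast
      ring
    calc (1 - (k:ℝ) ^ (-(1:ℝ)/4)) * ((2^m : ℕ):ℝ)^2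
        = ((2^m:ℕ):ℝ)^2 - (k:ℝ) ^ (-(1:ℝ)/4) * ((2^m:ℕ):ℝ)^2 := by ring
      _ ≤ ((2^m:ℕ):ℝ)^2 - (Z.card:ℝ) := by linarith [hZr2]
      _ = (((2^m) * (2^m) - Z.card : ℕ) : ℝ) := hcast.symm
      _ ≤ (mass (fun i j : Fin (2^m) => decide (((i:ℕ), (j:ℕ)) ∉ Z)) : ℝ) := by
          exact_mod_cast hmass


end Stmt10

/-- There is an absolute constant `c > 0` such that for every
integer `k ≥ 2` there exist a `k`-permutation `π`, a positive integer `N` with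
`N ≥ 2^{c·k^{1/12}}`, and an `N × N` binary matrix `M` whose mass is at least
`(1 − k^{−1/4})·N²` and which avoids `π`. -/
theorem stmt10 :
    ∃ c : ℝ, 0 < c ∧ ∀ k : ℕ, 2 ≤ k →
      ∃ (π : Equiv.Perm (Fin k)) (N : ℕ), 0 < N ∧
        (2 : ℝ) ^ (c * (k : ℝ) ^ ((1 : ℝ) / 12)) ≤ (N : ℝ) ∧
        ∃ M : Fin N → Fin N → Bool,
          (1 - (k : ℝ) ^ (-(1 : ℝ) / 4)) * (N : ℝ) ^ 2 ≤ (mass M : ℝ) ∧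
          AvoidsPerm M π := by
  refine ⟨(1:ℝ)/1024, by norm_num, ?_⟩
  intro k hk
  by_cases hA : (2:ℝ) ^ ((1:ℝ)/1024 * (k:ℝ) ^ ((1:ℝ)/12)) ≤ ((max 2 (k-1) : ℕ) : ℝ)
  · exact Stmt10.caseA k hk hA
  · push_neg at hA
    exact Stmt10.caseB k hk hA
end

section
/- For every permutation π and every positive integer n, T_{2n}(π) ≤ T_n(π)·15^{ex(n,π)}. -/
open Filter

section Aux

private def emb2 {n : ℕ} (a : Fin n) (s : Fin 2) : Fin (2 * n) :=
  ⟨2 * a.val + s.val, by have := a.isLt; have := s.isLt; omega⟩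

private lemma emb2_lt {n : ℕ} {a b : Fin n} (s t : Fin 2) (h : a < b) :
    emb2 a s < emb2 b t := by
  have hs := s.isLt; have ht := t.isLt
  simp only [emb2, Fin.lt_def] at *
  omega

private lemma emb2_surj {n : ℕ} (x : Fin (2 * n)) : ∃ a s, x = emb2 a s := by
  refine ⟨⟨x.val / 2, by have := x.isLt; omega⟩, ⟨x.val % 2, by omega⟩, ?_⟩
  simp only [emb2, Fin.ext_iff]
  omega

private def contract {n : ℕ} (A : Fin (2 * n) → Fin (2 * n) → Bool) :
    Fin n → Fin n → Bool :=
  fun i j => decide (∃ s t : Fin 2, A (emb2 i s) (emb2 j t) = true)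

private lemma contract_true_iff {n : ℕ} (A : Fin (2 * n) → Fin (2 * n) → Bool)
    (i j : Fin n) : contract A i j = true ↔ ∃ s t : Fin 2, A (emb2 i s) (emb2 j t) = true := by
  simp [contract]

private lemma avoid_contract {k n : ℕ} (π : Equiv.Perm (Fin k))
    (A : Fin (2 * n) → Fin (2 * n) → Bool) (h : AvoidsPerm A π) :
    AvoidsPerm (contract A) π := by
  rintro ⟨r, c, hr, hc, hm⟩
  apply h
  have key : ∀ i : Fin k, ∃ s t : Fin 2, A (emb2 (r i) s) (emb2 (c (π i)) t) = true := by
    intro i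
    have h1 : permMatrix π i (π i) = true := by simp [permMatrix]
    have := hm i (π i) h1
    rwa [contract_true_iff] at this
  choose s t hst using key
  refine ⟨fun i => emb2 (r i) (s i), fun j => emb2 (c j) (t (π.symm j)), ?_, ?_, ?_⟩
  · intro a b hab; exact emb2_lt _ _ (hr hab)
  · intro a b hab; exact emb2_lt _ _ (hc hab)
  · intro i j hij
    have hj : π i = j := by simpa [permMatrix] using hij
    subst hj
    simpa using hst i

private def Q15 : Type := {q : Fin 2 → Fin 2 → Bool // q ≠ fun _ _ => false}

instance : Fintype Q15 := by
  unfold Q15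
  infer_instance

private lemma card_Q15 : Fintype.card Q15 = 15 := by decide

private lemma contract_eq_false {n : ℕ} (A : Fin (2 * n) → Fin (2 * n) → Bool) (i j : Fin n)
    (h : contract A i j = false) : ∀ s t : Fin 2, A (emb2 i s) (emb2 j t) = false := by
  intro s t
  by_contra hc
  simp only [Bool.not_eq_false] at hc
  have : contract A i j = true := (contract_true_iff A i j).mpr ⟨s, t, hc⟩
  rw [this] at h
  exact Bool.noConfusion h

private lemma fiber_card {n : ℕ} (B : Fin n → Fin n → Bool) :
    Nat.card {A : Fin (2 * n) → Fin (2 * n) → Bool // contract A = B} ≤ 15 ^ mass B := by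
  classical
  have hinj : ∃ f : {A : Fin (2 * n) → Fin (2 * n) → Bool // contract A = B} →
      ({p : Fin n × Fin n // B p.1 p.2 = true} → Q15), Function.Injective f := by
    refine ⟨fun A p => ⟨fun s t => A.1 (emb2 p.1.1 s) (emb2 p.1.2 t), ?_⟩, ?_⟩
    · intro hzero
      have hB : contract A.1 p.1.1 p.1.2 = true := by rw [A.2]; exact p.2
      rw [contract_true_iff] at hB
      obtain ⟨s, t, hst⟩ := hB
      have h3 := congrFun (congrFun hzero s) t
      rw [hst] at h3
      exact Bool.noConfusion h3
    · rintro ⟨A1, hA1⟩ ⟨A2, hA2⟩ hf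
      ext x y
      obtain ⟨i, s, rfl⟩ := emb2_surj x
      obtain ⟨j, t, rfl⟩ := emb2_surj y
      by_cases hB : B i j = true
      · have := congrFun hf ⟨(i, j), hB⟩
        have := congrArg Subtype.val this
        exact congrFun (congrFun this s) t
      · have hBf : B i j = false := by
          cases hBij : B i j
          · rfl
          · exact absurd hBij hB
        have hf1 : contract A1 i j = false := by rw [hA1]; exact hBf
        have hf2 : contract A2 i j = false := by rw [hA2]; exact hBf
        show A1 (emb2 i s) (emb2 j t) = A2 (emb2 i s) (emb2 j t)
        rw [contract_eq_false A1 i j hf1 s t, contract_eq_false A2 i j hf2 s t]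
  obtain ⟨f, hf⟩ := hinj
  calc Nat.card {A : Fin (2 * n) → Fin (2 * n) → Bool // contract A = B}
      ≤ Nat.card ({p : Fin n × Fin n // B p.1 p.2 = true} → Q15) :=
        Nat.card_le_card_of_injective f hf
    _ = 15 ^ mass B := by
        rw [Nat.card_eq_fintype_card, Fintype.card_fun, card_Q15, Fintype.card_subtype]
        rfl

private lemma mass_le_exP {k n : ℕ} (π : Equiv.Perm (Fin k)) (B : Fin n → Fin n → Bool)
    (hB : AvoidsPerm B π) : mass B ≤ exP n π := by
  classical
  apply le_csSup
  · refine ⟨n * n, ?_⟩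
    rintro m ⟨A, -, rfl⟩
    calc mass A ≤ (Finset.univ : Finset (Fin n × Fin n)).card := Finset.card_filter_le _ _
      _ = n * n := by simp
  · exact ⟨B, hB, rfl⟩

end Aux

/-- For every permutation `π` and every positive integer `n`,
`T_{2n}(π) ≤ T_n(π)·15^{ex(n,π)}`. -/
theorem stmt11 {k : ℕ} (π : Equiv.Perm (Fin k)) (n : ℕ) (hn : 0 < n) :
    TP (2 * n) π ≤ TP n π * 15 ^ exP n π := by
  classical
  have hT2 : TP (2 * n) π =
      (Finset.univ.filter fun A : Fin (2 * n) → Fin (2 * n) → Bool => AvoidsPerm A π).card := by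
    rw [TP, Nat.card_eq_fintype_card, Fintype.card_subtype]
  have hT1 : TP n π =
      (Finset.univ.filter fun B : Fin n → Fin n → Bool => AvoidsPerm B π).card := by
    rw [TP, Nat.card_eq_fintype_card, Fintype.card_subtype]
  set S2 := Finset.univ.filter fun A : Fin (2 * n) → Fin (2 * n) → Bool => AvoidsPerm A π with hS2
  set S1 := Finset.univ.filter fun B : Fin n → Fin n → Bool => AvoidsPerm B π with hS1
  have hmap : ∀ A ∈ S2, contract A ∈ S1 := by
    intro A hA
    simp only [hS2, hS1, Finset.mem_filter, Finset.mem_univ, true_and] at hA ⊢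
    exact avoid_contract π A hA
  rw [hT2, hT1, Finset.card_eq_sum_card_fiberwise hmap]
  calc ∑ B ∈ S1, (S2.filter fun A => contract A = B).card
      ≤ ∑ _B ∈ S1, 15 ^ exP n π := by
        apply Finset.sum_le_sum
        intro B hB
        have hBav : AvoidsPerm B π := by
          simpa only [hS1, Finset.mem_filter, Finset.mem_univ, true_and] using hB
        calc (S2.filter fun A => contract A = B).card
            ≤ (Finset.univ.filter fun A => contract A = B).card :=
              Finset.card_le_card (Finset.filter_subset_filter _ (Finset.subset_univ _))
          _ = Nat.card {A : Fin (2 * n) → Fin (2 * n) → Bool // contract A = B} := by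
              rw [Nat.card_eq_fintype_card, Fintype.card_subtype]
          _ ≤ 15 ^ mass B := fiber_card B
          _ ≤ 15 ^ exP n π := Nat.pow_le_pow_right (by norm_num) (mass_le_exP π B hBav)
    _ = S1.card * 15 ^ exP n π := by rw [Finset.sum_const, smul_eq_mul]
end
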